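/- arXiv:1507.00551 — 10 statements merged into one kernel-verified Lean document; each statement's English description precedes it below -/
import Mathlib

section
/- Let f : ℝ₊ × X → X be a continuous semiflow on a metric space X and x ∈ X a point whose orbit closure is compact. Then there exists a minimal center of attraction of the motion f(t,x): a closed set C ⊆ X such that for every ε > 0 the set {t ≥ 0 : f(t,x) ∈ B_ε(C)} has density 1 in [0,∞), and no proper closed subset of C has this property. -/
open MeasureTheory Filter Metric Set Topology
open scoped Classical

noncomputable section

/-- The set `S ⊆ ℝ` has density `α` in `[0,∞)`. -/
def HasDens (S : Set ℝ) (α : ℝ) : Prop :=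
  Filter.Tendsto (fun T : ℝ => (MeasureTheory.volume (S ∩ Set.Icc 0 T)).toReal / T)
    Filter.atTop (nhds α)

/-- `f` is a continuous semiflow on `X` (time in `[0,∞)`). -/
def IsSemiflow {X : Type*} [MetricSpace X] (f : ℝ → X → X) : Prop :=
  ContinuousOn (fun p : ℝ × X => f p.1 p.2) (Set.Ici 0 ×ˢ Set.univ) ∧
  (∀ x : X, f 0 x = x) ∧
  (∀ s t : ℝ, 0 ≤ s → 0 ≤ t → ∀ x : X, f s (f t x) = f (s + t) x)

/-- `C` is a center of attraction of the motion `f (t, x)`. -/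
def IsCtr {X : Type*} [MetricSpace X] (f : ℝ → X → X) (x : X) (C : Set X) : Prop :=
  IsClosed C ∧ ∀ ε > (0 : ℝ), HasDens {t : ℝ | 0 ≤ t ∧ f t x ∈ Metric.thickening ε C} 1

/-- `C` is the minimal center of attraction of the motion `f (t, x)`. -/
def IsMCA {X : Type*} [MetricSpace X] (f : ℝ → X → X) (x : X) (C : Set X) : Prop :=
  IsCtr f x C ∧ ∀ C' ⊆ C, IsCtr f x C' → C' = C

/-- Density of larger sets: if `S ⊆ S'` and `S` has density 1, so does `S'`. -/
lemma hasDens_of_subset {S S' : Set ℝ} (h : S ⊆ S') (hS : HasDens S 1) : HasDens S' 1 := by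
  have hfin : ∀ T : ℝ, 0 < T → volume (S' ∩ Set.Icc 0 T) ≠ ⊤ := by
    intro T hT
    have h1 : volume (S' ∩ Set.Icc 0 T) ≤ volume (Set.Icc 0 T) :=
      measure_mono inter_subset_right
    refine ne_top_of_le_ne_top ?_ h1
    simp [Real.volume_Icc]
  refine tendsto_of_tendsto_of_tendsto_of_le_of_le' hS tendsto_const_nhds ?_ ?_
  · filter_upwards [eventually_gt_atTop (0 : ℝ)] with T hT
    have hle : volume (S ∩ Set.Icc 0 T) ≤ volume (S' ∩ Set.Icc 0 T) :=
      measure_mono (inter_subset_inter_left _ h)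
    have := ENNReal.toReal_mono (hfin T hT) hle
    gcongr
  · filter_upwards [eventually_gt_atTop (0 : ℝ)] with T hT
    rw [div_le_one hT]
    have hle : volume (S' ∩ Set.Icc 0 T) ≤ volume (Set.Icc 0 T) :=
      measure_mono inter_subset_right
    have := ENNReal.toReal_mono (by simp [Real.volume_Icc] : volume (Set.Icc (0:ℝ) T) ≠ ⊤) hle
    simpa [Real.volume_Icc, ENNReal.toReal_ofReal hT.le] using this

/-- The half-line `[0,∞)` has density 1. -/
lemma hasDens_Ici : HasDens (Set.Ici (0 : ℝ)) 1 := by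
  have : ∀ᶠ T in atTop, (volume (Set.Ici (0:ℝ) ∩ Set.Icc 0 T)).toReal / T = 1 := by
    filter_upwards [eventually_gt_atTop (0 : ℝ)] with T hT
    rw [Set.inter_eq_self_of_subset_right (Set.Icc_subset_Ici_self)]
    simp [Real.volume_Icc, ENNReal.toReal_ofReal hT.le, div_self hT.ne']
  exact Tendsto.congr' (this.mono fun T hT => hT.symm) tendsto_const_nhds

/-- A center of attraction is nonempty. -/
lemma IsCtr.nonempty' {X : Type*} [MetricSpace X] {f : ℝ → X → X} {x : X} {C : Set X}
    (h : IsCtr f x C) : C.Nonempty := by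
  by_contra h'
  rw [Set.not_nonempty_iff_eq_empty] at h'
  have h1 := h.2 1 one_pos
  rw [h'] at h1
  simp only [Metric.thickening_empty, Set.mem_empty_iff_false, and_false] at h1
  have h0 : HasDens (∅ : Set ℝ) 1 := by
    have : {t : ℝ | False} = (∅ : Set ℝ) := by simp
    rwa [this] at h1
  have h2 : Filter.Tendsto (fun T : ℝ => (volume ((∅ : Set ℝ) ∩ Set.Icc 0 T)).toReal / T)
      Filter.atTop (nhds 0) := by
    simpa using tendsto_const_nhds (α := ℝ) (f := Filter.atTop (α := ℝ)) (a := 0)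
  exact one_ne_zero (tendsto_nhds_unique h0 h2)

theorem exists_minimal_center_of_attraction {X : Type*} [MetricSpace X]
    (f : ℝ → X → X) (hf : IsSemiflow f) (x : X)
    (hx : IsCompact (closure {y : X | ∃ t : ℝ, 0 ≤ t ∧ f t x = y})) :
    ∃ C : Set X, IsMCA f x C := by
  set K := closure {y : X | ∃ t : ℝ, 0 ≤ t ∧ f t x = y} with hK
  -- K is a center of attraction
  have hKctr : IsCtr f x K := by
    refine ⟨isClosed_closure, fun ε hε => ?_⟩
    have heq : {t : ℝ | 0 ≤ t ∧ f t x ∈ Metric.thickening ε K} = Set.Ici (0 : ℝ) := by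
      ext t
      simp only [Set.mem_setOf_eq, Set.mem_Ici]
      refine ⟨fun h => h.1, fun h => ⟨h, ?_⟩⟩
      exact self_subset_thickening hε K (subset_closure ⟨t, h, rfl⟩)
    rw [heq]
    exact hasDens_Ici
  -- The family of closed centers of attraction contained in K
  set F : Set (Set X) := {C | IsCtr f x C ∧ C ⊆ K} with hF
  have hKF : K ∈ F := ⟨hKctr, Set.Subset.rfl⟩
  -- Zorn's lemma
  have hchain : ∀ c ⊆ F, IsChain (· ⊆ ·) c → c.Nonempty → ∃ lb ∈ F, ∀ s ∈ c, lb ⊆ s := by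
    intro c hcF hchain hcne
    set C := ⋂₀ c with hC
    have hCclosed : IsClosed C :=
      isClosed_sInter fun s hs => ((hcF hs).1).1
    obtain ⟨C₁, hC₁⟩ := hcne
    have hCsubK : C ⊆ K := (sInter_subset_of_mem hC₁).trans (hcF hC₁).2
    -- key compactness claim
    have hkey : ∀ ε : ℝ, 0 < ε → ∃ C₀ ∈ c, C₀ ⊆ Metric.thickening ε C := by
      intro ε hε
      by_contra hcon
      push_neg at hcon
      have hne : ∀ s : c, ((s : Set X) \ Metric.thickening ε C).Nonempty := by
        rintro ⟨s, hs⟩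
        exact Set.diff_nonempty.2 (hcon s hs)
      have hcompact : ∀ s : c, IsCompact ((s : Set X) \ Metric.thickening ε C) := by
        rintro ⟨s, hs⟩
        exact (hx.of_isClosed_subset ((hcF hs).1).1 (hcF hs).2).diff isOpen_thickening
      have hclosed : ∀ s : c, IsClosed ((s : Set X) \ Metric.thickening ε C) := by
        rintro ⟨s, hs⟩
        exact IsClosed.sdiff ((hcF hs).1).1 isOpen_thickening
      have hdir : Directed (· ⊇ ·) (fun s : c => (s : Set X) \ Metric.thickening ε C) := by
        rintro ⟨s, hs⟩ ⟨t, ht⟩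
        rcases hchain.total hs ht with h | h
        · exact ⟨⟨s, hs⟩, Set.Subset.rfl, Set.diff_subset_diff_left h⟩
        · exact ⟨⟨t, ht⟩, Set.diff_subset_diff_left h, Set.Subset.rfl⟩
      haveI : Nonempty c := ⟨⟨C₁, hC₁⟩⟩
      obtain ⟨y, hy⟩ := IsCompact.nonempty_iInter_of_directed_nonempty_isCompact_isClosed
        _ hdir hne hcompact hclosed
      simp only [Set.mem_iInter, Set.mem_diff] at hy
      have hyC : y ∈ C := by
        intro s hs
        exact (hy ⟨s, hs⟩).1
      exact (hy ⟨C₁, hC₁⟩).2 (self_subset_thickening hε C hyC)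
    -- C is a center of attraction
    have hCctr : IsCtr f x C := by
      refine ⟨hCclosed, fun ε hε => ?_⟩
      obtain ⟨C₀, hC₀c, hC₀⟩ := hkey (ε / 2) (half_pos hε)
      have hsub : Metric.thickening (ε / 2) C₀ ⊆ Metric.thickening ε C := by
        calc Metric.thickening (ε / 2) C₀
            ⊆ Metric.thickening (ε / 2) (Metric.thickening (ε / 2) C) :=
              thickening_subset_of_subset _ hC₀
          _ ⊆ Metric.thickening (ε / 2 + ε / 2) C := Metric.thickening_thickening_subset _ _ _
          _ = Metric.thickening ε C := by rw [add_halves]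
      refine hasDens_of_subset (fun t ht => ⟨ht.1, hsub ht.2⟩)
        (((hcF hC₀c).1).2 (ε / 2) (half_pos hε))
    exact ⟨C, ⟨hCctr, hCsubK⟩, fun s hs => sInter_subset_of_mem hs⟩
  obtain ⟨m, hmK, hmF, hmmin⟩ := zorn_superset_nonempty F hchain K hKF
  refine ⟨m, hmF.1, fun C' hC'm hC' => ?_⟩
  exact subset_antisymm hC'm (hmmin ⟨hC', hC'm.trans hmF.2⟩ hC'm)
end
end

section
/- Let f : ℝ₊ × X → X be a continuous semiflow on a metric space X, x ∈ X, and C_x the minimal center of attraction of the motion f(t,x). Then C_x equals the set of points y ∈ X such that for every neighborhood U of y, limsup_{T→∞} (1/T) ∫₀^T 1_U(f(t,x)) dt > 0. -/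
open MeasureTheory Filter Metric Set Topology
open scoped Classical

noncomputable section

namespace MCAHelper

/-- density quotient at time `T` -/
def dens (S : Set ℝ) (T : ℝ) : ℝ := (MeasureTheory.volume (S ∩ Set.Icc 0 T)).toReal / T

lemma vol_ne_top (S : Set ℝ) (T : ℝ) : volume (S ∩ Set.Icc 0 T) ≠ ⊤ := by
  refine ne_top_of_le_ne_top ?_ (measure_mono inter_subset_right)
  rw [Real.volume_Icc]
  exact ENNReal.ofReal_ne_top

lemma dens_of_nonpos (S : Set ℝ) {T : ℝ} (h : T ≤ 0) : dens S T = 0 := by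
  rcases lt_or_eq_of_le h with h | h
  · simp [dens, Set.Icc_eq_empty (not_le.2 h)]
  · subst h
    have : volume (S ∩ Set.Icc 0 0) = 0 := by
      apply measure_mono_null inter_subset_right
      simp
    simp [dens, this]

lemma dens_nonneg (S : Set ℝ) (T : ℝ) : 0 ≤ dens S T := by
  rcases le_or_gt T 0 with h | h
  · rw [dens_of_nonpos S h]
  · exact div_nonneg ENNReal.toReal_nonneg h.le

lemma dens_le_one (S : Set ℝ) (T : ℝ) : dens S T ≤ 1 := by
  rcases le_or_gt T 0 with h | h
  · rw [dens_of_nonpos S h]; norm_num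
  · rw [dens, div_le_one h]
    apply ENNReal.toReal_le_of_le_ofReal h.le
    refine le_trans (measure_mono inter_subset_right) ?_
    rw [Real.volume_Icc]
    simp

lemma dens_mono {A B : Set ℝ} (h : A ⊆ B) (T : ℝ) : dens A T ≤ dens B T := by
  rcases le_or_gt T 0 with hT | hT
  · rw [dens_of_nonpos A hT, dens_of_nonpos B hT]
  · apply div_le_div_of_nonneg_right ?_ hT.le |>.trans_eq rfl
    exact ENNReal.toReal_mono (vol_ne_top _ _) (measure_mono (inter_subset_inter_left _ h))

lemma dens_union_le (A B : Set ℝ) (T : ℝ) : dens (A ∪ B) T ≤ dens A T + dens B T := by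
  rcases le_or_gt T 0 with hT | hT
  · rw [dens_of_nonpos _ hT, dens_of_nonpos _ hT, dens_of_nonpos _ hT]; norm_num
  · rw [dens, dens, dens, ← add_div]
    apply div_le_div_of_nonneg_right ?_ hT.le |>.trans_eq rfl
    calc (volume ((A ∪ B) ∩ Set.Icc 0 T)).toReal
        ≤ (volume (A ∩ Set.Icc 0 T) + volume (B ∩ Set.Icc 0 T)).toReal := by
          apply ENNReal.toReal_mono (ENNReal.add_ne_top.2 ⟨vol_ne_top _ _, vol_ne_top _ _⟩)
          rw [Set.union_inter_distrib_right]
          exact measure_union_le _ _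
      _ = _ := ENNReal.toReal_add (vol_ne_top _ _) (vol_ne_top _ _)

lemma meas_pre {X : Type*} [MetricSpace X] {f : ℝ → X → X} (hf : IsSemiflow f) (x : X)
    {O : Set X} (hO : IsOpen O) : MeasurableSet {t : ℝ | 0 ≤ t ∧ f t x ∈ O} := by
  have hg : ContinuousOn (fun t : ℝ => f t x) (Set.Ici 0) := by
    refine hf.1.comp (Continuous.continuousOn (continuous_id.prodMk continuous_const)) ?_
    exact fun t ht => ⟨ht, Set.mem_univ x⟩
  rcases (_root_.continuousOn_iff'.1 hg) O hO with ⟨u, hu, hequ⟩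
  have : {t : ℝ | 0 ≤ t ∧ f t x ∈ O} = u ∩ Set.Ici 0 := by
    rw [← hequ]; ext t; simp [and_comm, Set.mem_preimage]
  rw [this]
  exact hu.measurableSet.inter measurableSet_Ici

end MCAHelper

open MCAHelper

theorem mca_eq_interesting_points {X : Type*} [MetricSpace X]
    (f : ℝ → X → X) (hf : IsSemiflow f) (x : X) (C : Set X) (hC : IsMCA f x C) :
    C = {y : X | ∀ U ∈ nhds y,
      0 < Filter.limsup
        (fun T : ℝ => (MeasureTheory.volume {t ∈ Set.Icc 0 T | f t x ∈ U}).toReal / T)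
        Filter.atTop} := by
  obtain ⟨⟨hCclosed, hCdens⟩, hmin⟩ := hC
  ext y
  simp only [Set.mem_setOf_eq]
  constructor
  · -- C ⊆ interesting points
    intro hy U hU
    by_contra hns
    push_neg at hns
    set SU : Set ℝ := {t | f t x ∈ U} with hSUdef
    have hfun : (fun T : ℝ => (volume {t ∈ Set.Icc 0 T | f t x ∈ U}).toReal / T) = dens SU := by
      funext T
      have : {t ∈ Set.Icc 0 T | f t x ∈ U} = SU ∩ Set.Icc 0 T := by
        ext t; simp [hSUdef, and_comm]
      rw [dens, this]
    rw [hfun] at hns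
    have hbdd : IsBoundedUnder (· ≤ ·) atTop (dens SU) :=
      isBoundedUnder_of ⟨1, fun T => dens_le_one SU T⟩
    have hbdd' : IsBoundedUnder (· ≥ ·) atTop (dens SU) :=
      isBoundedUnder_of ⟨0, fun T => dens_nonneg SU T⟩
    have hlim0 : Tendsto (dens SU) atTop (nhds 0) := by
      apply tendsto_of_le_liminf_of_limsup_le ?_ hns hbdd hbdd'
      exact le_liminf_of_le hbdd.isCoboundedUnder_ge
        (Filter.Eventually.of_forall fun T => dens_nonneg SU T)
    obtain ⟨r, hr, hball⟩ := Metric.mem_nhds_iff.1 hU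
    set C' := C \ ball y (r / 2) with hC'def
    have hsub : C' ⊆ C := Set.diff_subset
    have hctr' : IsCtr f x C' := by
      constructor
      · rw [hC'def, Set.diff_eq]
        exact hCclosed.inter isOpen_ball.isClosed_compl
      · intro ε hε
        set ε' := min ε (r / 2) with hε'def
        have hε'pos : 0 < ε' := lt_min hε (by linarith)
        have h1 : Tendsto (dens {t : ℝ | 0 ≤ t ∧ f t x ∈ thickening ε' C}) atTop (nhds 1) :=
          hCdens ε' hε'pos
        have hcov : {t : ℝ | 0 ≤ t ∧ f t x ∈ thickening ε' C} ⊆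
            {t : ℝ | 0 ≤ t ∧ f t x ∈ thickening ε C'} ∪ SU := by
          rintro t ⟨ht0, htm⟩
          rcases Metric.mem_thickening_iff.1 htm with ⟨c, hc, hdc⟩
          by_cases hcb : c ∈ ball y (r / 2)
          · right
            apply hball
            rw [mem_ball]
            have h1 := mem_ball.1 hcb
            have h2 : ε' ≤ r / 2 := min_le_right _ _
            calc dist (f t x) y ≤ dist (f t x) c + dist c y := dist_triangle _ _ _
              _ < ε' + r / 2 := by linarith
              _ ≤ r := by linarith
          · left
            exact ⟨ht0, Metric.mem_thickening_iff.2
              ⟨c, ⟨hc, hcb⟩, lt_of_lt_of_le hdc (min_le_left _ _)⟩⟩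
        have hlow : ∀ T, dens {t : ℝ | 0 ≤ t ∧ f t x ∈ thickening ε' C} T - dens SU T ≤
            dens {t : ℝ | 0 ≤ t ∧ f t x ∈ thickening ε C'} T := by
          intro T
          have := (dens_mono hcov T).trans (dens_union_le _ _ T)
          linarith
        have h1' : Tendsto (fun T => dens {t : ℝ | 0 ≤ t ∧ f t x ∈ thickening ε' C} T
            - dens SU T) atTop (nhds 1) := by
          have := h1.sub hlim0
          simpa using this
        exact tendsto_of_tendsto_of_tendsto_of_le_of_le h1' tendsto_const_nhds hlow
          (fun T => dens_le_one _ T)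
    have hEq := hmin C' hsub hctr'
    have hy' : y ∈ C' := hEq ▸ hy
    exact hy'.2 (mem_ball_self (by linarith))
  · -- interesting points ⊆ C
    intro hy
    by_contra hyC
    obtain ⟨ε, hε, hballC⟩ := Metric.mem_nhds_iff.1 (hCclosed.isOpen_compl.mem_nhds hyC)
    set U := ball y (ε / 3) with hUdef
    have hU : U ∈ nhds y := ball_mem_nhds y (by linarith)
    have hcontr := hy U hU
    set A := {t : ℝ | 0 ≤ t ∧ f t x ∈ thickening (ε / 3) C} with hAdef
    have hAm : MeasurableSet A := meas_pre hf x isOpen_thickening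
    have hAd : Tendsto (dens A) atTop (nhds 1) := hCdens (ε / 3) (by linarith)
    have hub : ∀ T : ℝ, 0 < T →
        (volume {t ∈ Set.Icc 0 T | f t x ∈ U}).toReal / T ≤ 1 - dens A T := by
      intro T hT
      have hsub2 : {t ∈ Set.Icc 0 T | f t x ∈ U} ⊆ Set.Icc 0 T \ A := by
        rintro t ⟨htI, htU⟩
        refine ⟨htI, ?_⟩
        rintro ⟨-, htm⟩
        rcases Metric.mem_thickening_iff.1 htm with ⟨c, hc, hdc⟩
        refine hballC (mem_ball.2 ?_) hc
        calc dist c y ≤ dist c (f t x) + dist (f t x) y := dist_triangle _ _ _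
          _ < ε / 3 + ε / 3 := add_lt_add (by rwa [dist_comm]) (mem_ball.1 htU)
          _ < ε := by linarith
      have key : volume (Set.Icc 0 T ∩ A) + volume (Set.Icc 0 T \ A) = volume (Set.Icc 0 T) :=
        measure_inter_add_diff _ hAm
      have hfin1 : volume (Set.Icc 0 T ∩ A) ≠ ⊤ := by
        rw [Set.inter_comm]; exact vol_ne_top _ _
      have hfin2 : volume (Set.Icc 0 T \ A) ≠ ⊤ := by
        refine ne_top_of_le_ne_top ?_ (measure_mono Set.diff_subset)
        rw [Real.volume_Icc]; exact ENNReal.ofReal_ne_top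
      have h2 : (volume (Set.Icc 0 T \ A)).toReal = T - (volume (A ∩ Set.Icc 0 T)).toReal := by
        have hkey := congrArg ENNReal.toReal key
        rw [ENNReal.toReal_add hfin1 hfin2, Real.volume_Icc, sub_zero,
          ENNReal.toReal_ofReal hT.le, Set.inter_comm] at hkey
        linarith
      calc (volume {t ∈ Set.Icc 0 T | f t x ∈ U}).toReal / T
          ≤ (volume (Set.Icc 0 T \ A)).toReal / T := by
            apply div_le_div_of_nonneg_right ?_ hT.le |>.trans_eq rfl
            exact ENNReal.toReal_mono hfin2 (measure_mono hsub2)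
        _ = 1 - dens A T := by
            rw [h2, dens, sub_div, div_self hT.ne']
    have hkey : Filter.limsup
        (fun T : ℝ => (volume {t ∈ Set.Icc 0 T | f t x ∈ U}).toReal / T) atTop ≤ 0 := by
      have hg : Tendsto (fun T => 1 - dens A T) atTop (nhds 0) := by
        have := hAd.const_sub 1
        simpa using this
      have hle : ∀ᶠ T in atTop,
          (volume {t ∈ Set.Icc 0 T | f t x ∈ U}).toReal / T ≤ 1 - dens A T :=
        eventually_atTop.2 ⟨1, fun T hT => hub T (by linarith)⟩
      have hcob : IsCoboundedUnder (· ≤ ·) atTop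
          (fun T : ℝ => (volume {t ∈ Set.Icc 0 T | f t x ∈ U}).toReal / T) := by
        apply Filter.isCoboundedUnder_le_of_eventually_le atTop (x := 0)
        filter_upwards [eventually_ge_atTop (0 : ℝ)] with T hT
        exact div_nonneg ENNReal.toReal_nonneg hT
      have hbddv : IsBoundedUnder (· ≤ ·) atTop (fun T => 1 - dens A T) :=
        isBoundedUnder_of ⟨1, fun T => by linarith [dens_nonneg A T]⟩
      calc Filter.limsup _ atTop ≤ Filter.limsup (fun T => 1 - dens A T) atTop :=
            Filter.limsup_le_limsup hle hcob hbddv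
        _ = 0 := hg.limsup_eq
    exact absurd hcontr (not_lt.2 hkey)
end
end

section
/- Let f : ℝ₊ × X → X be a continuous semiflow on a metric space X and x ∈ X a point admitting a minimal center of attraction C_x. Then C_x is invariant under the semiflow: for every y ∈ C_x and t ≥ 0, f(t,y) ∈ C_x. -/
open MeasureTheory Filter Metric Set Topology
open scoped Classical

noncomputable section

/-! ### Auxiliary lemmas -/

lemma aux_vol_ne_top (S : Set ℝ) (T : ℝ) : volume (S ∩ Icc 0 T) ≠ ⊤ := by
  refine ne_top_of_le_ne_top ?_ (measure_mono inter_subset_right)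
  simp [Real.volume_Icc]

lemma aux_vol_toReal_le (S : Set ℝ) {T : ℝ} (hT : 0 ≤ T) :
    (volume (S ∩ Icc 0 T)).toReal ≤ T := by
  have h : volume (S ∩ Icc 0 T) ≤ ENNReal.ofReal T := by
    have := measure_mono (μ := volume) (inter_subset_right (s := S) (t := Icc 0 T))
    rwa [Real.volume_Icc, sub_zero] at this
  calc (volume (S ∩ Icc 0 T)).toReal ≤ (ENNReal.ofReal T).toReal :=
        ENNReal.toReal_mono ENNReal.ofReal_ne_top h
    _ = T := ENNReal.toReal_ofReal hT

lemma aux_subadd (D D' A : Set ℝ) (hsub : D ⊆ D' ∪ A) (T : ℝ) :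
    (volume (D ∩ Icc 0 T)).toReal ≤
      (volume (D' ∩ Icc 0 T)).toReal + (volume (A ∩ Icc 0 T)).toReal := by
  have h1 : D ∩ Icc 0 T ⊆ (D' ∩ Icc 0 T) ∪ (A ∩ Icc 0 T) := by
    rintro s ⟨hsD, hsI⟩
    rcases hsub hsD with h | h
    · exact Or.inl ⟨h, hsI⟩
    · exact Or.inr ⟨h, hsI⟩
  have h2 : volume (D ∩ Icc 0 T) ≤ volume (D' ∩ Icc 0 T) + volume (A ∩ Icc 0 T) :=
    (measure_mono h1).trans (measure_union_le _ _)
  calc (volume (D ∩ Icc 0 T)).toReal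
      ≤ (volume (D' ∩ Icc 0 T) + volume (A ∩ Icc 0 T)).toReal :=
        ENNReal.toReal_mono (ENNReal.add_ne_top.2 ⟨aux_vol_ne_top _ _, aux_vol_ne_top _ _⟩) h2
    _ = _ := ENNReal.toReal_add (aux_vol_ne_top _ _) (aux_vol_ne_top _ _)

/-- Squeeze lemma for densities: if `D` has density 1, `A` has density 0, and
`D ⊆ D' ∪ A`, then `D'` has density 1. -/
lemma aux_dens_squeeze {D D' A : Set ℝ} (hsub : D ⊆ D' ∪ A)
    (hD : Tendsto (fun T : ℝ => (volume (D ∩ Icc 0 T)).toReal / T) atTop (nhds 1))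
    (hA : Tendsto (fun T : ℝ => (volume (A ∩ Icc 0 T)).toReal / T) atTop (nhds 0)) :
    Tendsto (fun T : ℝ => (volume (D' ∩ Icc 0 T)).toReal / T) atTop (nhds 1) := by
  have hlow : Tendsto (fun T : ℝ =>
      (volume (D ∩ Icc 0 T)).toReal / T - (volume (A ∩ Icc 0 T)).toReal / T)
      atTop (nhds 1) := by
    have := hD.sub hA
    simpa using this
  refine tendsto_of_tendsto_of_tendsto_of_le_of_le' hlow tendsto_const_nhds ?_ ?_
  · filter_upwards [eventually_ge_atTop (1 : ℝ)] with T hT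
    have hT0 : (0 : ℝ) < T := by linarith
    have h := aux_subadd D D' A hsub T
    have : (volume (D ∩ Icc 0 T)).toReal / T ≤
        (volume (D' ∩ Icc 0 T)).toReal / T + (volume (A ∩ Icc 0 T)).toReal / T := by
      rw [← add_div]
      exact div_le_div_of_nonneg_right h hT0.le |>.trans_eq rfl
    linarith
  · filter_upwards [eventually_ge_atTop (1 : ℝ)] with T hT
    have hT0 : (0 : ℝ) < T := by linarith
    rw [div_le_one hT0]
    exact aux_vol_toReal_le _ hT0.le

/-- If `C` is a minimal center of attraction and `y ∈ C`, then the set of times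
the motion spends in any ball around `y` cannot have density zero. -/
lemma aux_not_dens_zero {X : Type*} [MetricSpace X]
    (f : ℝ → X → X) (x : X) (C : Set X) (hC : IsMCA f x C)
    {y : X} (hy : y ∈ C) {η : ℝ} (hη : 0 < η) :
    ¬ Tendsto (fun T : ℝ =>
        (volume ({s : ℝ | 0 ≤ s ∧ f s x ∈ ball y η} ∩ Icc 0 T)).toReal / T)
      atTop (nhds 0) := by
  intro hA
  set C' : Set X := C ∩ (ball y (η / 2))ᶜ with hC'def
  have hC'closed : IsClosed C' := hC.1.1.inter isOpen_ball.isClosed_compl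
  have hC'sub : C' ⊆ C := inter_subset_left
  have hctr : IsCtr f x C' := by
    refine ⟨hC'closed, fun δ hδ => ?_⟩
    set δ' : ℝ := min δ (η / 4) with hδ'def
    have hδ' : 0 < δ' := lt_min hδ (by linarith)
    have hD : HasDens {s : ℝ | 0 ≤ s ∧ f s x ∈ thickening δ' C} 1 := hC.1.2 δ' hδ'
    have hsub : {s : ℝ | 0 ≤ s ∧ f s x ∈ thickening δ' C} ⊆
        {s : ℝ | 0 ≤ s ∧ f s x ∈ thickening δ C'} ∪ {s : ℝ | 0 ≤ s ∧ f s x ∈ ball y η} := by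
      rintro s ⟨hs0, hs⟩
      rcases Metric.mem_thickening_iff.1 hs with ⟨c, hcC, hdist⟩
      by_cases hcb : c ∈ ball y (η / 2)
      · refine Or.inr ⟨hs0, ?_⟩
        have h1 : dist c y < η / 2 := mem_ball.1 hcb
        have h2 : δ' ≤ η / 4 := min_le_right _ _
        have : dist (f s x) y < η := by
          calc dist (f s x) y ≤ dist (f s x) c + dist c y := dist_triangle _ _ _
            _ < δ' + η / 2 := by linarith
            _ ≤ η / 4 + η / 2 := by linarith
            _ < η := by linarith
        exact mem_ball.2 this
      · refine Or.inl ⟨hs0, ?_⟩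
        refine Metric.mem_thickening_iff.2 ⟨c, ⟨hcC, hcb⟩, ?_⟩
        exact hdist.trans_le (min_le_left _ _)
    exact aux_dens_squeeze hsub hD hA
  have heq : C' = C := hC.2 C' hC'sub hctr
  have : y ∈ C' := heq ▸ hy
  exact this.2 (mem_ball_self (by linarith))

theorem mca_invariant {X : Type*} [MetricSpace X]
    (f : ℝ → X → X) (hf : IsSemiflow f) (x : X) (C : Set X) (hC : IsMCA f x C) :
    ∀ y ∈ C, ∀ t : ℝ, 0 ≤ t → f t y ∈ C := by
  intro y hy t ht
  by_contra hz
  set z : X := f t y with hzdef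
  have hd : 0 < infDist z C := (hC.1.1.notMem_iff_infDist_pos ⟨y, hy⟩).1 hz
  set d : ℝ := infDist z C with hddef
  -- continuity of `u ↦ f t u`
  have hcont : Continuous fun u : X => f t u := by
    rw [← continuousOn_univ]
    intro u _
    have h1 : ContinuousWithinAt (fun p : ℝ × X => f p.1 p.2) (Ici 0 ×ˢ univ) (t, u) :=
      hf.1 _ ⟨ht, mem_univ u⟩
    exact h1.comp ((continuous_const.prodMk continuous_id).continuousWithinAt)
      (fun v _ => ⟨ht, mem_univ v⟩)
  obtain ⟨η, hη, hηball⟩ := Metric.continuousAt_iff.1 (hcont.continuousAt (x := y)) (d / 2) (half_pos hd)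
  -- continuity of `s ↦ f s x` on `[0, ∞)`
  have hgcont : ContinuousOn (fun s : ℝ => f s x) (Ici 0) := by
    intro s hs
    have h1 : ContinuousWithinAt (fun p : ℝ × X => f p.1 p.2) (Ici 0 ×ˢ univ) (s, x) :=
      hf.1 _ ⟨hs, mem_univ x⟩
    have h2 : ContinuousWithinAt (fun v : ℝ => ((v, x) : ℝ × X)) (Ici 0) s :=
      (continuous_id.prodMk continuous_const).continuousWithinAt
    exact ContinuousWithinAt.comp (g := fun p : ℝ × X => f p.1 p.2)
      (f := fun v : ℝ => ((v, x) : ℝ × X)) (s := Ici 0) (t := Ici 0 ×ˢ univ) h1 h2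
      (fun v hv => ⟨hv, mem_univ x⟩)
  set A : Set ℝ := {s : ℝ | 0 ≤ s ∧ f s x ∈ ball y η} with hAdef
  set B : Set ℝ := {s : ℝ | 0 ≤ s ∧ f s x ∈ ball z (d / 2)} with hBdef
  set D : Set ℝ := {s : ℝ | 0 ≤ s ∧ f s x ∈ thickening (d / 2) C} with hDdef
  have hDdens : HasDens D 1 := hC.1.2 (d / 2) (half_pos hd)
  -- `B` is measurable
  have hBmeas : MeasurableSet B := by
    obtain ⟨V, hV, hVeq⟩ := continuousOn_iff'.1 hgcont (ball z (d / 2)) isOpen_ball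
    have : B = V ∩ Ici 0 := by
      rw [← hVeq]
      ext s
      simp only [hBdef, mem_setOf_eq, mem_inter_iff, mem_preimage, mem_Ici]
      tauto
    rw [this]
    exact hV.measurableSet.inter measurableSet_Ici
  -- key measure bound: the orbit cannot be both near `C` and near `z`
  have hkey : ∀ S : ℝ, 0 ≤ S →
      (volume (D ∩ Icc 0 S)).toReal ≤ S - (volume (B ∩ Icc 0 S)).toReal := by
    intro S hS
    have hdisj : D ∩ Icc 0 S ⊆ Icc 0 S \ (B ∩ Icc 0 S) := by
      rintro s ⟨⟨hs0, hsD⟩, hsI⟩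
      refine ⟨hsI, ?_⟩
      rintro ⟨⟨-, hsB⟩, -⟩
      rcases Metric.mem_thickening_iff.1 hsD with ⟨c, hcC, hdist⟩
      have h1 : dist (f s x) z < d / 2 := mem_ball.1 hsB
      have h2 : d ≤ dist z c := infDist_le_dist_of_mem hcC
      have h3 : dist z c ≤ dist z (f s x) + dist (f s x) c := dist_triangle _ _ _
      rw [dist_comm] at h1
      linarith
    have hmd : volume (Icc 0 S \ (B ∩ Icc 0 S)) = volume (Icc 0 S) - volume (B ∩ Icc 0 S) :=
      measure_diff inter_subset_right (hBmeas.inter measurableSet_Icc).nullMeasurableSet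
        (aux_vol_ne_top _ _)
    calc (volume (D ∩ Icc 0 S)).toReal
        ≤ (volume (Icc 0 S \ (B ∩ Icc 0 S))).toReal := by
          refine ENNReal.toReal_mono ?_ (measure_mono hdisj)
          refine ne_top_of_le_ne_top ?_ (measure_mono diff_subset)
          simp [Real.volume_Icc]
      _ = (volume (Icc 0 S)).toReal - (volume (B ∩ Icc 0 S)).toReal := by
          rw [hmd]
          exact ENNReal.toReal_sub_of_le (measure_mono inter_subset_right)
            (by simp [Real.volume_Icc])
      _ = S - (volume (B ∩ Icc 0 S)).toReal := by
          rw [Real.volume_Icc, sub_zero, ENNReal.toReal_ofReal hS]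
  -- shift bound: times in `A` get sent (after time `t`) into `B`
  have hshift : ∀ T : ℝ, volume (A ∩ Icc 0 T) ≤ volume (B ∩ Icc 0 (T + t)) := by
    intro T
    have hsub : A ∩ Icc 0 T ⊆ (fun u : ℝ => u + t) ⁻¹' (B ∩ Icc 0 (T + t)) := by
      rintro s ⟨⟨hs0, hsball⟩, hs1, hs2⟩
      have hfe : f (s + t) x = f t (f s x) := by
        rw [hf.2.2 t s ht hs0 x, add_comm]
      have hmemB : s + t ∈ B := by
        refine ⟨by linarith, ?_⟩
        show f (s + t) x ∈ ball z (d / 2)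
        rw [hfe]
        exact mem_ball.2 (hηball (mem_ball.1 hsball))
      have hmemI : s + t ∈ Icc 0 (T + t) := ⟨by linarith, by linarith⟩
      exact ⟨hmemB, hmemI⟩
    calc volume (A ∩ Icc 0 T) ≤ volume ((fun u : ℝ => u + t) ⁻¹' (B ∩ Icc 0 (T + t))) :=
          measure_mono hsub
      _ = volume (B ∩ Icc 0 (T + t)) := measure_preimage_add_right volume t _
  -- conclude `A` has density 0
  have hpsi : Tendsto (fun T : ℝ => (T + t) / T) atTop (nhds 1) := by
    have h1 : Tendsto (fun T : ℝ => 1 + t * T⁻¹) atTop (nhds (1 + t * 0)) :=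
      tendsto_const_nhds.add (tendsto_const_nhds.mul tendsto_inv_atTop_zero)
    rw [mul_zero, add_zero] at h1
    refine h1.congr' ?_
    filter_upwards [eventually_ge_atTop (1 : ℝ)] with T hT
    have hT0 : T ≠ 0 := by linarith
    field_simp
  have hDshift : Tendsto (fun T : ℝ => (volume (D ∩ Icc 0 (T + t))).toReal / (T + t))
      atTop (nhds 1) :=
    hDdens.comp (tendsto_atTop_add_const_right atTop t tendsto_id)
  have hprod : Tendsto (fun T : ℝ =>
      ((T + t) / T) * (1 - (volume (D ∩ Icc 0 (T + t))).toReal / (T + t)))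
      atTop (nhds 0) := by
    have := hpsi.mul ((tendsto_const_nhds (x := (1:ℝ))).sub hDshift)
    simpa using this
  have hA0 : Tendsto (fun T : ℝ => (volume (A ∩ Icc 0 T)).toReal / T) atTop (nhds 0) := by
    refine tendsto_of_tendsto_of_tendsto_of_le_of_le' tendsto_const_nhds hprod ?_ ?_
    · filter_upwards [eventually_ge_atTop (1 : ℝ)] with T hT
      positivity
    · filter_upwards [eventually_ge_atTop (1 : ℝ)] with T hT
      have hT0 : (0 : ℝ) < T := by linarith
      have hTt0 : (0 : ℝ) < T + t := by linarith
      have h1 : (volume (A ∩ Icc 0 T)).toReal ≤ (volume (B ∩ Icc 0 (T + t))).toReal :=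
        ENNReal.toReal_mono (aux_vol_ne_top _ _) (hshift T)
      have h2 := hkey (T + t) (by linarith)
      have h3 : (volume (A ∩ Icc 0 T)).toReal ≤
          (T + t) - (volume (D ∩ Icc 0 (T + t))).toReal := by linarith
      have h4 : (volume (A ∩ Icc 0 T)).toReal / T ≤
          ((T + t) - (volume (D ∩ Icc 0 (T + t))).toReal) / T :=
        div_le_div_of_nonneg_right h3 hT0.le |>.trans_eq rfl
      refine h4.trans_eq ?_
      field_simp
  exact aux_not_dens_zero f x C hC hy hη hA0
end
end

section
/- Let f : ℝ₊ × X → X be a continuous semiflow on a metric space X, x ∈ X with minimal center of attraction C_x, and θ > 0. Then C_x = { y ∈ X : for every neighborhood U of y, limsup_{N→∞, N∈ℕ} (1/N) ∫₀^{Nθ} 1_U(f(t,x)) dt > 0 }. -/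
open MeasureTheory Filter Metric Set Topology
open scoped Classical

noncomputable section

/-! ### Auxiliary lemmas -/

lemma vol_inter_Icc_ne_top (S : Set ℝ) (T : ℝ) :
    MeasureTheory.volume (S ∩ Set.Icc 0 T) ≠ ⊤ :=
  ((measure_mono (μ := volume) Set.inter_subset_right).trans_lt (by
    rw [Real.volume_Icc]; exact ENNReal.ofReal_lt_top)).ne

lemma vol_inter_Icc_toReal_le (S : Set ℝ) {T : ℝ} (hT : 0 ≤ T) :
    (MeasureTheory.volume (S ∩ Set.Icc 0 T)).toReal ≤ T := by
  have h := measure_mono (μ := volume) (Set.inter_subset_right (s := S) (t := Set.Icc 0 T))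
  rw [Real.volume_Icc] at h
  calc (volume (S ∩ Set.Icc 0 T)).toReal ≤ (ENNReal.ofReal (T - 0)).toReal :=
        ENNReal.toReal_mono ENNReal.ofReal_ne_top h
    _ = T := by rw [ENNReal.toReal_ofReal (by linarith)]; ring

lemma vol_toReal_mono {S S' : Set ℝ} (hSS : S ⊆ S') (T : ℝ) :
    (MeasureTheory.volume (S ∩ Set.Icc 0 T)).toReal ≤
      (MeasureTheory.volume (S' ∩ Set.Icc 0 T)).toReal :=
  ENNReal.toReal_mono (vol_inter_Icc_ne_top _ _)
    (measure_mono (Set.inter_subset_inter_left _ hSS))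

lemma hasDens_mono {S S' : Set ℝ} (hSS : S ⊆ S') (h : HasDens S 1) : HasDens S' 1 := by
  apply tendsto_of_tendsto_of_tendsto_of_le_of_le' h tendsto_const_nhds
  · filter_upwards [eventually_gt_atTop (0:ℝ)] with T hT
    exact div_le_div_of_nonneg_right (vol_toReal_mono hSS T) hT.le
  · filter_upwards [eventually_gt_atTop (0:ℝ)] with T hT
    rw [div_le_one hT]
    exact vol_inter_Icc_toReal_le _ hT.le

lemma measurableSet_times {X : Type*} [MetricSpace X] (f : ℝ → X → X) (hf : IsSemiflow f)
    (x : X) {U : Set X} (hU : IsOpen U) :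
    MeasurableSet {t : ℝ | 0 ≤ t ∧ f t x ∈ U} := by
  have hcont : Continuous (fun t : ℝ => f (max t 0) x) :=
    hf.1.comp_continuous ((continuous_id.max continuous_const).prodMk continuous_const)
      (fun t => ⟨le_max_right (id t) (0:ℝ), Set.mem_univ _⟩)
  have heq : {t : ℝ | 0 ≤ t ∧ f t x ∈ U}
      = Set.Ici 0 ∩ (fun t : ℝ => f (max t 0) x) ⁻¹' U := by
    ext t
    simp only [Set.mem_setOf_eq, Set.mem_inter_iff, Set.mem_Ici, Set.mem_preimage]
    constructor
    · rintro ⟨h0, hm⟩; exact ⟨h0, by rwa [max_eq_left h0]⟩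
    · rintro ⟨h0, hm⟩; exact ⟨h0, by rwa [max_eq_left h0] at hm⟩
  rw [heq]
  exact measurableSet_Ici.inter (hU.preimage hcont).measurableSet

lemma sep_eq {X : Type*} [MetricSpace X] (f : ℝ → X → X) (x : X) (V : Set X) (a : ℝ) :
    {t ∈ Set.Icc 0 a | f t x ∈ V} = {t : ℝ | 0 ≤ t ∧ f t x ∈ V} ∩ Set.Icc 0 a := by
  ext t
  simp only [Set.mem_sep_iff, Set.mem_inter_iff, Set.mem_setOf_eq, Set.mem_Icc]
  tauto

theorem mca_eq_theta {X : Type*} [MetricSpace X]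
    (f : ℝ → X → X) (hf : IsSemiflow f) (x : X) (C : Set X) (hC : IsMCA f x C)
    (θ : ℝ) (hθ : 0 < θ) :
    C = {y : X | ∀ U ∈ nhds y,
      0 < Filter.limsup
        (fun N : ℕ =>
          (MeasureTheory.volume {t ∈ Set.Icc 0 ((N : ℝ) * θ) | f t x ∈ U}).toReal / N)
        Filter.atTop} := by
  obtain ⟨⟨hCcl, hCd⟩, hCmin⟩ := hC
  have hsep : ∀ (V : Set X) (a : ℝ),
      {t ∈ Set.Icc 0 a | f t x ∈ V} = {t : ℝ | 0 ≤ t ∧ f t x ∈ V} ∩ Set.Icc 0 a :=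
    fun V a => sep_eq f x V a
  -- C is nonempty
  have hCne : C.Nonempty := by
    rw [Set.nonempty_iff_ne_empty]
    intro hE
    have h1 := hCd 1 one_pos
    rw [hE] at h1
    have h2 : {t : ℝ | 0 ≤ t ∧ f t x ∈ Metric.thickening 1 (∅ : Set X)} = ∅ := by
      simp [Metric.thickening_empty]
    rw [h2] at h1
    have h0 : Filter.Tendsto
        (fun T : ℝ => (volume ((∅ : Set ℝ) ∩ Set.Icc 0 T)).toReal / T)
        Filter.atTop (nhds 0) := by
      simp only [Set.empty_inter, measure_empty, ENNReal.toReal_zero, zero_div]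
      exact tendsto_const_nhds
    exact one_ne_zero (tendsto_nhds_unique h1 h0)
  ext y
  simp only [Set.mem_setOf_eq]
  constructor
  · -- C ⊆ RHS
    intro hyC U hU
    by_contra hlim
    push_neg at hlim
    obtain ⟨r, hr, hball⟩ := Metric.mem_nhds_iff.mp hU
    set B : Set ℝ := {t : ℝ | 0 ≤ t ∧ f t x ∈ Metric.ball y r} with hBdef
    set g : ℕ → ℝ := fun N => (volume (B ∩ Set.Icc 0 ((N : ℝ) * θ))).toReal / N with hgdef
    set gU : ℕ → ℝ := fun N =>
      (volume {t ∈ Set.Icc 0 ((N : ℝ) * θ) | f t x ∈ U}).toReal / N with hgUdef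
    have hg_nonneg : ∀ N, 0 ≤ g N := fun N => by positivity
    have hgU_le : ∀ N, gU N ≤ θ := by
      intro N
      rcases Nat.eq_zero_or_pos N with h | h
      · simp [hgUdef, h, hθ.le]
      · have hN : (0:ℝ) < N := by exact_mod_cast h
        rw [hgUdef]
        simp only
        rw [div_le_iff₀ hN, hsep]
        have := vol_inter_Icc_toReal_le
          {t : ℝ | 0 ≤ t ∧ f t x ∈ U} (T := (N : ℝ) * θ) (by positivity)
        linarith
    have hBsub : B ⊆ {t : ℝ | 0 ≤ t ∧ f t x ∈ U} := fun t ht => ⟨ht.1, hball ht.2⟩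
    have hmono : ∀ N, g N ≤ gU N := by
      intro N
      rw [hgdef, hgUdef]
      simp only
      rw [hsep]
      exact div_le_div_of_nonneg_right (vol_toReal_mono hBsub _) (Nat.cast_nonneg N)
    have hg_le : ∀ N, g N ≤ θ := fun N => (hmono N).trans (hgU_le N)
    have hbddU : Filter.IsBoundedUnder (· ≤ ·) Filter.atTop gU :=
      Filter.isBoundedUnder_of ⟨θ, hgU_le⟩
    have hbddg : Filter.IsBoundedUnder (· ≤ ·) Filter.atTop g :=
      Filter.isBoundedUnder_of ⟨θ, hg_le⟩
    have hbddg' : Filter.IsBoundedUnder (· ≥ ·) Filter.atTop g :=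
      Filter.isBoundedUnder_of ⟨0, hg_nonneg⟩
    have hls : Filter.limsup g Filter.atTop ≤ 0 :=
      le_trans (Filter.limsup_le_limsup (Filter.Eventually.of_forall hmono)
        hbddg'.isCoboundedUnder_le hbddU) hlim
    have hli : (0:ℝ) ≤ Filter.liminf g Filter.atTop :=
      Filter.le_liminf_of_le hbddg.isCoboundedUnder_ge
        (Filter.Eventually.of_forall hg_nonneg)
    have hgto : Filter.Tendsto g Filter.atTop (nhds 0) :=
      tendsto_of_le_liminf_of_limsup_le hli hls hbddg hbddg'
    -- density of the ball-times tends to 0 along real times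
    have hceil : Filter.Tendsto (fun T : ℝ => ⌈T / θ⌉₊) Filter.atTop Filter.atTop :=
      (Nat.ceil_mono.tendsto_atTop_atTop
        (fun b => ⟨(b : ℝ), by simp⟩)).comp (Tendsto.atTop_div_const hθ tendsto_id)
    have hcomp : Filter.Tendsto (fun T : ℝ => (2 / θ) * g ⌈T / θ⌉₊)
        Filter.atTop (nhds 0) := by
      have := (hgto.comp hceil).const_mul (2 / θ)
      simpa using this
    have hBto : Filter.Tendsto
        (fun T : ℝ => (volume (B ∩ Set.Icc 0 T)).toReal / T) Filter.atTop (nhds 0) := by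
      apply tendsto_of_tendsto_of_tendsto_of_le_of_le' tendsto_const_nhds hcomp
      · filter_upwards [eventually_ge_atTop (θ : ℝ)] with T hT
        have hT0 : 0 < T := lt_of_lt_of_le hθ hT
        positivity
      · filter_upwards [eventually_ge_atTop (θ : ℝ)] with T hT
        have hT0 : 0 < T := lt_of_lt_of_le hθ hT
        set N : ℕ := ⌈T / θ⌉₊ with hNdef
        have hN1 : 1 ≤ (N : ℝ) := by
          have : (1:ℝ) ≤ T / θ := (one_le_div hθ).mpr hT
          exact_mod_cast this.trans (Nat.le_ceil _)
        have hN0 : (0:ℝ) < N := lt_of_lt_of_le one_pos hN1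
        have hTle : T ≤ (N : ℝ) * θ := by
          have := Nat.le_ceil (T / θ)
          rw [div_le_iff₀ hθ] at this
          exact this
        have hNle : (N : ℝ) ≤ 2 * T / θ := by
          have h1 : (N : ℝ) < T / θ + 1 := by
            have := Nat.ceil_lt_add_one (a := T / θ) (by positivity)
            exact_mod_cast this
          have h2 : (1:ℝ) ≤ T / θ := (one_le_div hθ).mpr hT
          have : (N : ℝ) ≤ 2 * (T / θ) := by linarith
          linarith [this, (by ring : 2 * (T / θ) = 2 * T / θ)]
        have hv1 : (volume (B ∩ Set.Icc 0 T)).toReal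
            ≤ (volume (B ∩ Set.Icc 0 ((N : ℝ) * θ))).toReal :=
          ENNReal.toReal_mono (vol_inter_Icc_ne_top _ _)
            (measure_mono (Set.inter_subset_inter_right _ (Set.Icc_subset_Icc_right hTle)))
        have hv0 : 0 ≤ (volume (B ∩ Set.Icc 0 ((N : ℝ) * θ))).toReal :=
          ENNReal.toReal_nonneg
        have key : (volume (B ∩ Set.Icc 0 ((N : ℝ) * θ))).toReal / T
            ≤ 2 / θ * ((volume (B ∩ Set.Icc 0 ((N : ℝ) * θ))).toReal / N) := by
          set v := (volume (B ∩ Set.Icc 0 ((N : ℝ) * θ))).toReal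
          rw [div_le_iff₀ hT0]
          have : 2 / θ * (v / ↑N) * T = v * (2 * T / (θ * N)) := by
            field_simp
          rw [this]
          have h0 : θ * (N:ℝ) ≤ 2 * T := by
            calc θ * (N:ℝ) ≤ θ * (2 * T / θ) := mul_le_mul_of_nonneg_left hNle hθ.le
              _ = 2 * T := by field_simp
          have h1 : (1:ℝ) ≤ 2 * T / (θ * N) := by
            rw [le_div_iff₀ (by positivity)]
            linarith
          nlinarith
        calc (volume (B ∩ Set.Icc 0 T)).toReal / T
            ≤ (volume (B ∩ Set.Icc 0 ((N : ℝ) * θ))).toReal / T :=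
              div_le_div_of_nonneg_right hv1 hT0.le
          _ ≤ 2 / θ * g N := key
    -- remove a small ball around y from C, still a center: contradiction
    set C' : Set X := C \ Metric.ball y (r / 2) with hC'def
    have hC'ctr : IsCtr f x C' := by
      refine ⟨hCcl.sdiff Metric.isOpen_ball, ?_⟩
      intro ε hε
      set ε' : ℝ := min ε (r / 4) with hε'def
      have hε'pos : 0 < ε' := lt_min hε (by linarith)
      have hthick : Metric.thickening ε' C ⊆
          Metric.thickening ε' C' ∪ Metric.ball y r := by
        intro z hz
        obtain ⟨c, hcC, hd⟩ := Metric.mem_thickening_iff.mp hz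
        by_cases hc : c ∈ Metric.ball y (r / 2)
        · right
          rw [Metric.mem_ball] at hc ⊢
          have h1 : dist z y ≤ dist z c + dist c y := dist_triangle z c y
          have h2 : ε' ≤ r / 4 := min_le_right _ _
          linarith
        · left
          exact Metric.mem_thickening_iff.mpr ⟨c, ⟨hcC, hc⟩, hd⟩
      have hsetsub : {t : ℝ | 0 ≤ t ∧ f t x ∈ Metric.thickening ε' C} ⊆
          {t : ℝ | 0 ≤ t ∧ f t x ∈ Metric.thickening ε' C'} ∪ B := by
        intro t ht
        rcases hthick ht.2 with h | h
        · exact Or.inl ⟨ht.1, h⟩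
        · exact Or.inr ⟨ht.1, Metric.ball_subset_ball (by linarith) h⟩
      have hdens' : HasDens {t : ℝ | 0 ≤ t ∧ f t x ∈ Metric.thickening ε' C'} 1 := by
        set S' := {t : ℝ | 0 ≤ t ∧ f t x ∈ Metric.thickening ε' C'} with hS'def
        have hlow : ∀ T : ℝ,
            (volume ({t : ℝ | 0 ≤ t ∧ f t x ∈ Metric.thickening ε' C} ∩ Set.Icc 0 T)).toReal
            ≤ (volume (S' ∩ Set.Icc 0 T)).toReal + (volume (B ∩ Set.Icc 0 T)).toReal := by
          intro T
          have h1 : volume ({t : ℝ | 0 ≤ t ∧ f t x ∈ Metric.thickening ε' C} ∩ Set.Icc 0 T)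
              ≤ volume (S' ∩ Set.Icc 0 T) + volume (B ∩ Set.Icc 0 T) := by
            calc volume ({t : ℝ | 0 ≤ t ∧ f t x ∈ Metric.thickening ε' C} ∩ Set.Icc 0 T)
                ≤ volume ((S' ∪ B) ∩ Set.Icc 0 T) :=
                  measure_mono (Set.inter_subset_inter_left _ hsetsub)
              _ = volume ((S' ∩ Set.Icc 0 T) ∪ (B ∩ Set.Icc 0 T)) := by
                  rw [Set.union_inter_distrib_right]
              _ ≤ _ := measure_union_le _ _
          calc (volume ({t : ℝ | 0 ≤ t ∧ f t x ∈ Metric.thickening ε' C} ∩ Set.Icc 0 T)).toReal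
              ≤ (volume (S' ∩ Set.Icc 0 T) + volume (B ∩ Set.Icc 0 T)).toReal :=
                ENNReal.toReal_mono
                  (ENNReal.add_ne_top.mpr ⟨vol_inter_Icc_ne_top _ _, vol_inter_Icc_ne_top _ _⟩) h1
            _ = _ := ENNReal.toReal_add (vol_inter_Icc_ne_top _ _) (vol_inter_Icc_ne_top _ _)
        have hsub1 : Filter.Tendsto (fun T : ℝ =>
            (volume ({t : ℝ | 0 ≤ t ∧ f t x ∈ Metric.thickening ε' C} ∩ Set.Icc 0 T)).toReal / T
            - (volume (B ∩ Set.Icc 0 T)).toReal / T) Filter.atTop (nhds 1) := by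
          have := (hCd ε' hε'pos).sub hBto
          simpa using this
        apply tendsto_of_tendsto_of_tendsto_of_le_of_le' hsub1 tendsto_const_nhds
        · filter_upwards [eventually_gt_atTop (0:ℝ)] with T hT
          have := hlow T
          rw [sub_le_iff_le_add, ← add_div, div_le_div_iff_of_pos_right]
          · linarith
          · exact hT
        · filter_upwards [eventually_gt_atTop (0:ℝ)] with T hT
          rw [div_le_one hT]
          exact vol_inter_Icc_toReal_le _ hT.le
      have hthick_mono : Metric.thickening ε' C' ⊆ Metric.thickening ε C' :=
        Metric.thickening_mono (min_le_left _ _) _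
      exact hasDens_mono (fun t ht => ⟨ht.1, hthick_mono ht.2⟩) hdens'
    have hEq : C' = C := hCmin C' Set.diff_subset hC'ctr
    have hyC' : y ∈ C' := hEq ▸ hyC
    exact hyC'.2 (Metric.mem_ball_self (by linarith))
  · -- RHS ⊆ C
    intro hy
    by_contra hyC
    have hdpos : 0 < Metric.infDist y C :=
      ((hCcl.notMem_iff_infDist_pos hCne).mp hyC)
    set ε : ℝ := Metric.infDist y C / 3 with hεdef
    have hε : 0 < ε := by positivity
    have hdisj : ∀ z, z ∈ Metric.ball y ε → z ∉ Metric.thickening ε C := by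
      intro z hz hthk
      obtain ⟨c, hcC, hzc⟩ := Metric.mem_thickening_iff.mp hthk
      have h1 : Metric.infDist y C ≤ dist y c := Metric.infDist_le_dist_of_mem hcC
      have h2 : dist y c ≤ dist y z + dist z c := dist_triangle y z c
      rw [Metric.mem_ball, dist_comm] at hz
      linarith
    set S := {t : ℝ | 0 ≤ t ∧ f t x ∈ Metric.thickening ε C} with hSdef
    have hSmeas : MeasurableSet S := measurableSet_times f hf x Metric.isOpen_thickening
    have hSd : HasDens S 1 := hCd ε hε
    set g : ℕ → ℝ := fun N =>
      (volume {t ∈ Set.Icc 0 ((N : ℝ) * θ) | f t x ∈ Metric.ball y ε}).toReal / N with hgdef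
    -- v N := measure of S within [0, Nθ]
    have hvto : Filter.Tendsto
        (fun N : ℕ => (volume (S ∩ Set.Icc 0 ((N : ℝ) * θ))).toReal / ((N : ℝ) * θ))
        Filter.atTop (nhds 1) :=
      hSd.comp (Tendsto.atTop_mul_const hθ tendsto_natCast_atTop_atTop)
    have hupper : Filter.Tendsto
        (fun N : ℕ => θ * (1 - (volume (S ∩ Set.Icc 0 ((N : ℝ) * θ))).toReal / ((N : ℝ) * θ)))
        Filter.atTop (nhds 0) := by
      have := ((tendsto_const_nhds (x := (1:ℝ)) (f := Filter.atTop (α := ℕ))).sub hvto).const_mul θ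
      simpa using this
    have hgto : Filter.Tendsto g Filter.atTop (nhds 0) := by
      apply tendsto_of_tendsto_of_tendsto_of_le_of_le' tendsto_const_nhds hupper
      · exact Filter.Eventually.of_forall fun N => by positivity
      · filter_upwards [eventually_ge_atTop 1] with N hN
        have hN0 : (0:ℝ) < N := by exact_mod_cast hN
        have hNθ : (0:ℝ) < (N : ℝ) * θ := by positivity
        -- the ball-times are inside Icc \ S
        have hsub : {t ∈ Set.Icc 0 ((N : ℝ) * θ) | f t x ∈ Metric.ball y ε}
            ⊆ Set.Icc 0 ((N : ℝ) * θ) \ (S ∩ Set.Icc 0 ((N : ℝ) * θ)) := by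
          rintro t ⟨htI, htb⟩
          refine ⟨htI, fun hts => hdisj _ htb hts.1.2⟩
        have hmeas2 : MeasurableSet (S ∩ Set.Icc 0 ((N : ℝ) * θ)) :=
          hSmeas.inter measurableSet_Icc
        have hdiff : volume (Set.Icc 0 ((N : ℝ) * θ) \ (S ∩ Set.Icc 0 ((N : ℝ) * θ)))
            = volume (Set.Icc 0 ((N : ℝ) * θ)) - volume (S ∩ Set.Icc 0 ((N : ℝ) * θ)) :=
          measure_diff Set.inter_subset_right hmeas2.nullMeasurableSet
            (vol_inter_Icc_ne_top _ _)
        have hIccvol : (volume (Set.Icc (0:ℝ) ((N : ℝ) * θ))).toReal = (N : ℝ) * θ := by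
          rw [Real.volume_Icc, sub_zero, ENNReal.toReal_ofReal (by positivity)]
        have hle : volume (S ∩ Set.Icc 0 ((N : ℝ) * θ)) ≤ volume (Set.Icc (0:ℝ) ((N : ℝ) * θ)) :=
          measure_mono Set.inter_subset_right
        have hIccne : volume (Set.Icc (0:ℝ) ((N : ℝ) * θ)) ≠ ⊤ := by
          rw [Real.volume_Icc]; exact ENNReal.ofReal_ne_top
        have hnum : (volume {t ∈ Set.Icc 0 ((N : ℝ) * θ) | f t x ∈ Metric.ball y ε}).toReal
            ≤ (N : ℝ) * θ - (volume (S ∩ Set.Icc 0 ((N : ℝ) * θ))).toReal := by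
          have h1 := measure_mono (μ := volume) hsub
          rw [hdiff] at h1
          have h2 := ENNReal.toReal_mono
            (by
              rw [ne_eq, ENNReal.sub_eq_top_iff]
              exact fun h => hIccne h.1) h1
          rw [ENNReal.toReal_sub_of_le hle hIccne, hIccvol] at h2
          exact h2
        rw [hgdef]
        simp only
        rw [div_le_iff₀ hN0]
        have hvle : (volume (S ∩ Set.Icc 0 ((N : ℝ) * θ))).toReal / ((N : ℝ) * θ)
            * ((N : ℝ) * θ) = (volume (S ∩ Set.Icc 0 ((N : ℝ) * θ))).toReal := by
          field_simp
        nlinarith [hnum, ENNReal.toReal_nonneg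
          (a := volume (S ∩ Set.Icc 0 ((N : ℝ) * θ)))]
      -- end bound
    have hlimeq : Filter.limsup g Filter.atTop = 0 := hgto.limsup_eq
    have := hy (Metric.ball y ε) (Metric.ball_mem_nhds y hε)
    rw [hlimeq] at this
    exact lt_irrefl 0 this
end
end

section
/- Let f : ℝ₊ × X → X be a continuous semiflow on a Polish space X. If there exists a point x̂ ∈ X whose minimal center of attraction C_{x̂} equals all of X, then the set {x ∈ X : C_x = X} is residual in X (i.e., contains a dense G_δ set). -/
open MeasureTheory Filter Metric Set Topology
open scoped Classical

noncomputable section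

namespace SigAux

variable {X : Type*} [MetricSpace X]

/-- volume of time in `[0,T]` spent in `U`, as a real number. -/
def mvol (f : ℝ → X → X) (x : X) (U : Set X) (T : ℝ) : ℝ :=
  (volume ({t : ℝ | f (max t 0) x ∈ U} ∩ Icc 0 T)).toReal

lemma contF {f : ℝ → X → X} (hf : IsSemiflow f) :
    Continuous (fun p : ℝ × X => f (max p.1 0) p.2) := by
  have h1 : Continuous (fun p : ℝ × X => ((max p.1 0, p.2) : ℝ × X)) :=
    (continuous_fst.max continuous_const).prodMk continuous_snd
  have h2 : ContinuousOn (fun p : ℝ × X => f (max p.1 0) p.2) univ :=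
    hf.1.comp h1.continuousOn (fun p _ => ⟨le_max_right p.1 0, mem_univ _⟩)
  exact continuousOn_univ.mp h2

lemma isOpen_mset {f : ℝ → X → X} (hf : IsSemiflow f) (x : X) {U : Set X} (hU : IsOpen U) :
    IsOpen {t : ℝ | f (max t 0) x ∈ U} :=
  hU.preimage ((contF hf).comp (continuous_id.prodMk continuous_const))

lemma vol_inter_le (S : Set ℝ) (T : ℝ) : volume (S ∩ Icc 0 T) ≤ ENNReal.ofReal T := by
  calc volume (S ∩ Icc 0 T) ≤ volume (Icc 0 T) := measure_mono inter_subset_right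
  _ = ENNReal.ofReal T := by rw [Real.volume_Icc, sub_zero]

lemma vol_inter_ne_top (S : Set ℝ) (T : ℝ) : volume (S ∩ Icc 0 T) ≠ ⊤ :=
  ((vol_inter_le S T).trans_lt ENNReal.ofReal_lt_top).ne

lemma vol_toReal_le (S : Set ℝ) {T : ℝ} (hT : 0 ≤ T) : (volume (S ∩ Icc 0 T)).toReal ≤ T := by
  have := ENNReal.toReal_mono ENNReal.ofReal_ne_top (vol_inter_le S T)
  rwa [ENNReal.toReal_ofReal hT] at this

lemma mvol_nonneg (f : ℝ → X → X) (x : X) (U : Set X) (T : ℝ) : 0 ≤ mvol f x U T :=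
  ENNReal.toReal_nonneg

lemma mvol_le (f : ℝ → X → X) (x : X) (U : Set X) {T : ℝ} (hT : 0 ≤ T) : mvol f x U T ≤ T :=
  vol_toReal_le _ hT

lemma isOpen_gt_mvol {f : ℝ → X → X} (hf : IsSemiflow f) {U : Set X} (hU : IsOpen U)
    (T c : ℝ) : IsOpen {x : X | c < mvol f x U T} := by
  rcases lt_or_ge c 0 with hc | hc
  · have : {x : X | c < mvol f x U T} = univ :=
      eq_univ_of_forall fun x => hc.trans_le (mvol_nonneg f x U T)
    rw [this]; exact isOpen_univ
  refine isOpen_iff_mem_nhds.mpr fun x₀ hx₀ => ?_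
  set A := {t : ℝ | f (max t 0) x₀ ∈ U} ∩ Icc 0 T with hA
  have hAm : MeasurableSet A := (isOpen_mset hf x₀ hU).measurableSet.inter measurableSet_Icc
  have hfin : volume A ≠ ⊤ := vol_inter_ne_top _ T
  have hlt : ENNReal.ofReal c < volume A :=
    (ENNReal.ofReal_lt_iff_lt_toReal hc hfin).mpr hx₀
  have hε : volume A - ENNReal.ofReal c ≠ 0 := by
    rw [Ne, tsub_eq_zero_iff_le, not_le]; exact hlt
  obtain ⟨K, hKA, hK, hKlt⟩ := hAm.exists_isCompact_lt_add hfin hε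
  have hcK : ENNReal.ofReal c < volume K := by
    by_contra h
    push_neg at h
    have : volume K + (volume A - ENNReal.ofReal c) ≤ volume A := by
      calc volume K + (volume A - ENNReal.ofReal c)
          ≤ ENNReal.ofReal c + (volume A - ENNReal.ofReal c) := by gcongr
        _ = volume A := add_tsub_cancel_of_le hlt.le
    exact absurd hKlt (not_lt.mpr this)
  -- tube lemma
  have hΩ : IsOpen {p : ℝ × X | f (max p.1 0) p.2 ∈ U} := hU.preimage (contF hf)
  have hsub : K ×ˢ ({x₀} : Set X) ⊆ {p : ℝ × X | f (max p.1 0) p.2 ∈ U} := by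
    rintro ⟨t, x⟩ ⟨ht, hx⟩
    rcases hx with rfl
    exact (hKA ht).1
  obtain ⟨u, v, hu, hv, hKu, hx₀v, huv⟩ :=
    generalized_tube_lemma hK isCompact_singleton hΩ hsub
  refine Filter.mem_of_superset (hv.mem_nhds (hx₀v rfl)) fun x hx => ?_
  have hKx : K ⊆ {t : ℝ | f (max t 0) x ∈ U} ∩ Icc 0 T := by
    intro t ht
    have : ((t, x) : ℝ × X) ∈ {p : ℝ × X | f (max p.1 0) p.2 ∈ U} := huv ⟨hKu ht, hx⟩
    exact ⟨this, (hKA ht).2⟩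
  have : ENNReal.ofReal c < volume ({t : ℝ | f (max t 0) x ∈ U} ∩ Icc 0 T) :=
    hcK.trans_le (measure_mono hKx)
  have := ENNReal.toReal_strict_mono (vol_inter_ne_top _ T) this
  rwa [ENNReal.toReal_ofReal hc] at this

lemma hasDens_one_of (S V : Set ℝ)
    (hcov : ∀ T, 0 ≤ T → Icc 0 T ⊆ S ∪ V)
    (hV : Tendsto (fun T => (volume (V ∩ Icc 0 T)).toReal / T) atTop (nhds 0)) :
    HasDens S 1 := by
  have hlow : Tendsto (fun T => 1 - (volume (V ∩ Icc 0 T)).toReal / T) atTop (nhds 1) := by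
    have := (tendsto_const_nhds (x := (1:ℝ)) (f := atTop)).sub hV
    simpa using this
  refine tendsto_of_tendsto_of_tendsto_of_le_of_le' hlow tendsto_const_nhds ?_ ?_
  · filter_upwards [eventually_ge_atTop (1 : ℝ)] with T hT
    have hT0 : (0 : ℝ) < T := lt_of_lt_of_le one_pos hT
    rw [sub_le_iff_le_add, ← add_div, le_div_iff₀ hT0, one_mul]
    have hsum : ENNReal.ofReal T ≤ volume (S ∩ Icc 0 T) + volume (V ∩ Icc 0 T) := by
      calc ENNReal.ofReal T = volume (Icc (0:ℝ) T) := by rw [Real.volume_Icc, sub_zero]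
        _ ≤ volume ((S ∩ Icc 0 T) ∪ (V ∩ Icc 0 T)) := by
            refine measure_mono fun t ht => ?_
            rcases hcov T hT0.le ht with h | h
            · exact Or.inl ⟨h, ht⟩
            · exact Or.inr ⟨h, ht⟩
        _ ≤ volume (S ∩ Icc 0 T) + volume (V ∩ Icc 0 T) := measure_union_le _ _
    have h2 := ENNReal.toReal_mono ?_ hsum
    · rwa [ENNReal.toReal_ofReal hT0.le, ENNReal.toReal_add (vol_inter_ne_top _ _)
        (vol_inter_ne_top _ _)] at h2
    · exact ENNReal.add_ne_top.mpr ⟨vol_inter_ne_top _ _, vol_inter_ne_top _ _⟩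
  · filter_upwards [eventually_ge_atTop (1 : ℝ)] with T hT
    have hT0 : (0 : ℝ) < T := lt_of_lt_of_le one_pos hT
    rw [div_le_one hT0]
    exact vol_toReal_le _ hT0.le

lemma tendsto_zero_of_small (g : ℝ → ℝ) (hg : ∀ T, 1 ≤ T → 0 ≤ g T)
    (h : ∀ ε > (0:ℝ), ∀ᶠ T in atTop, g T < ε * T) :
    Tendsto (fun T => g T / T) atTop (nhds 0) := by
  rw [Metric.tendsto_nhds]
  intro ε hε
  filter_upwards [h ε hε, eventually_ge_atTop (1 : ℝ)] with T h1 h2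
  have hT0 : (0 : ℝ) < T := lt_of_lt_of_le one_pos h2
  rw [Real.dist_0_eq_abs, abs_of_nonneg (div_nonneg (hg T h2) hT0.le)]
  exact (div_lt_iff₀ hT0).mpr (by linarith [h1])



variable {f : ℝ → X → X}

lemma isCtr_univ (hx : Nonempty X) (x : X) : IsCtr f x (univ : Set X) := by
  refine ⟨isClosed_univ, fun ε hε => ?_⟩
  refine hasDens_one_of _ ∅ (fun T hT t ht => Or.inl ⟨ht.1, ?_⟩) ?_
  · rw [eq_univ_of_univ_subset (self_subset_thickening hε (univ : Set X))]
    trivial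
  · have : (fun T : ℝ => (volume ((∅ : Set ℝ) ∩ Icc 0 T)).toReal / T) = fun _ => 0 := by
      funext T; simp
    rw [this]
    exact tendsto_const_nhds

lemma freq (hf : IsSemiflow f) {xhat : X} (hxhat : IsMCA f xhat (univ : Set X))
    (y : X) {ρ : ℝ} (hρ : 0 < ρ) :
    ∃ ε > (0:ℝ), ∃ᶠ T in atTop, ε * T ≤ mvol f xhat (ball y ρ) T := by
  by_contra h
  push_neg at h
  have h' : ∀ ε > (0:ℝ), ∀ᶠ T in atTop, mvol f xhat (ball y ρ) T < ε * T := by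
    intro ε hε
    have := h ε hε
    filter_upwards [this] with T hT
    exact hT
  have h0 : Tendsto (fun T => mvol f xhat (ball y ρ) T / T) atTop (nhds 0) :=
    tendsto_zero_of_small _ (fun T _ => mvol_nonneg f xhat _ T) h'
  have hc : IsCtr f xhat (ball y ρ)ᶜ := by
    refine ⟨isOpen_ball.isClosed_compl, fun ε hε => ?_⟩
    refine hasDens_one_of _ {t : ℝ | f (max t 0) xhat ∈ ball y ρ} ?_ h0
    intro T hT t ht
    by_cases hb : f t xhat ∈ ball y ρ
    · right
      show f (max t 0) xhat ∈ ball y ρ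
      rwa [max_eq_left ht.1]
    · exact Or.inl ⟨ht.1, self_subset_thickening hε _ hb⟩
  have heq := hxhat.2 _ (subset_univ _) hc
  have : y ∈ (ball y ρ)ᶜ := heq.symm ▸ mem_univ y
  exact this (mem_ball_self hρ)

lemma dense_orbit (hf : IsSemiflow f) {xhat : X} (hxhat : IsMCA f xhat (univ : Set X)) :
    Dense {z : X | ∃ s, 0 ≤ s ∧ f s xhat = z} := by
  set O := {z : X | ∃ s, 0 ≤ s ∧ f s xhat = z} with hO
  have hc : IsCtr f xhat (closure O) := by
    refine ⟨isClosed_closure, fun ε hε => ?_⟩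
    refine hasDens_one_of _ ∅ (fun T hT t ht => Or.inl ⟨ht.1,
      self_subset_thickening hε _ (subset_closure ⟨t, ht.1, rfl⟩)⟩) ?_
    have : (fun T : ℝ => (volume ((∅ : Set ℝ) ∩ Icc 0 T)).toReal / T) = fun _ => 0 := by
      funext T; simp
    rw [this]
    exact tendsto_const_nhds
  have heq := hxhat.2 _ (subset_univ _) hc
  rwa [dense_iff_closure_eq]

lemma shift_vol (hf : IsSemiflow f) (U : Set X) {s T' : ℝ} (hs : 0 ≤ s) (hsT : s ≤ T')
    (x : X) :
    volume ({t : ℝ | f (max t 0) x ∈ U} ∩ Icc 0 T') ≤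
      volume ({t : ℝ | f (max t 0) (f s x) ∈ U} ∩ Icc 0 (T' - s)) + ENNReal.ofReal s := by
  set E := {t : ℝ | f (max t 0) (f s x) ∈ U} ∩ Icc 0 (T' - s) with hE
  have key : {t : ℝ | f (max t 0) x ∈ U} ∩ Icc 0 T' ⊆ ((-s) + ·) ⁻¹' E ∪ Icc 0 s := by
    rintro t ⟨htU, ht0, htT⟩
    rcases le_or_gt t s with hts | hts
    · exact Or.inr ⟨ht0, hts⟩
    · left
      show -s + t ∈ E
      have h1 : (0:ℝ) ≤ t - s := by linarith
      have h2 : max t 0 = t := max_eq_left ht0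
      constructor
      · show f (max (-s + t) 0) (f s x) ∈ U
        have : max (-s + t) 0 = t - s := by rw [max_eq_left (by linarith)]; ring
        rw [this, hf.2.2 (t - s) s h1 hs, sub_add_cancel, ← h2]
        exact htU
      · constructor <;> [linarith; linarith]
  calc volume ({t : ℝ | f (max t 0) x ∈ U} ∩ Icc 0 T')
      ≤ volume (((-s) + ·) ⁻¹' E ∪ Icc 0 s) := measure_mono key
    _ ≤ volume (((-s) + ·) ⁻¹' E) + volume (Icc (0:ℝ) s) := measure_union_le _ _
    _ = volume E + ENNReal.ofReal s := by
        rw [measure_preimage_add, Real.volume_Icc, sub_zero]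

end SigAux

theorem sigmund_conjecture {X : Type*} [MetricSpace X]
    [TopologicalSpace.SeparableSpace X] [CompleteSpace X]
    (f : ℝ → X → X) (hf : IsSemiflow f) (xhat : X) (hxhat : IsMCA f xhat (Set.univ : Set X)) :
    {x : X | IsMCA f x (Set.univ : Set X)} ∈ residual X := by
  classical
  haveI : Nonempty X := ⟨xhat⟩
  obtain ⟨u, hu⟩ := TopologicalSpace.exists_dense_seq X
  set B : ℕ → ℕ → Set X := fun m j => ball (u m) (1 / (j + 1 : ℝ)) with hB
  have hrad : ∀ j : ℕ, (0:ℝ) < 1 / (j + 1) := fun j => by positivity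
  have H : ∀ m j : ℕ, ∃ ε > (0:ℝ), ∃ᶠ T in atTop, ε * T ≤ SigAux.mvol f xhat (B m j) T :=
    fun m j => SigAux.freq hf hxhat (u m) (hrad j)
  choose ε εpos hfreq using H
  set W : ℕ → ℕ → ℕ → Set X := fun m j k =>
    ⋃ (T : ℝ) (_ : max (k:ℝ) 1 ≤ T),
      {x : X | (ε m j / 2) * T < SigAux.mvol f x (B m j) T} with hW
  have hWopen : ∀ m j k, IsOpen (W m j k) := fun m j k =>
    isOpen_iUnion fun T => isOpen_iUnion fun _ => SigAux.isOpen_gt_mvol hf isOpen_ball T _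
  have horb : ∀ m j k, {z : X | ∃ s, 0 ≤ s ∧ f s xhat = z} ⊆ W m j k := by
    rintro m j k _ ⟨s, hs, rfl⟩
    have hfr := hfreq m j
    rw [Filter.frequently_atTop] at hfr
    obtain ⟨T', hT', hbig⟩ :=
      hfr (max (max (k:ℝ) 1 + s) ((2 * (s + 1)) / ε m j + s))
    obtain ⟨T, hT⟩ : ∃ T : ℝ, T = T' - s := ⟨_, rfl⟩
    have hTk : max (k:ℝ) 1 ≤ T := by
      have := le_trans (le_max_left _ _) hT'
      simp only [hT]; linarith
    have hT1 : (1:ℝ) ≤ T := le_trans (le_max_right _ _) hTk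
    have hT2 : 2 * (s + 1) / ε m j ≤ T := by
      have := le_trans (le_max_right _ _) hT'
      simp only [hT]; linarith
    have hsT' : s ≤ T' := by
      have h1 := le_trans (le_max_left _ _) hT'
      have h2 : (1:ℝ) ≤ max (k:ℝ) 1 := le_max_right _ _
      linarith
    have hvol := SigAux.shift_vol hf (B m j) hs hsT' xhat
    rw [← hT] at hvol
    have hrhs : volume ({t : ℝ | f (max t 0) (f s xhat) ∈ B m j} ∩ Icc 0 T)
        + ENNReal.ofReal s ≠ ⊤ :=
      ENNReal.add_ne_top.mpr ⟨SigAux.vol_inter_ne_top _ _, ENNReal.ofReal_ne_top⟩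
    have h3 := ENNReal.toReal_mono hrhs hvol
    rw [ENNReal.toReal_add (SigAux.vol_inter_ne_top _ _) ENNReal.ofReal_ne_top,
      ENNReal.toReal_ofReal hs] at h3
    simp only [hW, mem_iUnion]
    refine ⟨T, hTk, ?_⟩
    show (ε m j / 2) * T < SigAux.mvol f (f s xhat) (B m j) T
    have hε := εpos m j
    have hd : 2 * (s + 1) ≤ ε m j * T := by
      rw [div_le_iff₀ hε] at hT2; linarith [hT2]
    have hεs : 0 ≤ ε m j * s := mul_nonneg hε.le hs
    have hT'T : T' = T + s := by simp only [hT]; ring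
    unfold SigAux.mvol at hbig ⊢
    rw [hT'T] at hbig h3
    rw [mul_add] at hbig
    linarith [hbig, h3, hd, hεs]
  have hWdense : ∀ m j k, Dense (W m j k) := fun m j k =>
    (SigAux.dense_orbit hf hxhat).mono (horb m j k)
  have hres : (⋂ m, ⋂ j, ⋂ k, W m j k) ∈ residual X := by
    refine countable_iInter_mem.mpr fun m => ?_
    refine countable_iInter_mem.mpr fun j => ?_
    refine countable_iInter_mem.mpr fun k => ?_
    exact residual_of_dense_open (hWopen m j k) (hWdense m j k)
  refine Filter.mem_of_superset hres ?_
  intro x hx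
  simp only [mem_iInter] at hx
  show IsMCA f x univ
  refine ⟨SigAux.isCtr_univ ⟨xhat⟩ x, ?_⟩
  intro C' _ hC'
  by_contra hne
  obtain ⟨y, hy⟩ := (ne_univ_iff_exists_notMem C').mp hne
  rcases C'.eq_empty_or_nonempty with rfl | hCne
  · have hd := hC'.2 1 one_pos
    have hset : {t : ℝ | 0 ≤ t ∧ f t x ∈ thickening 1 (∅ : Set X)} = ∅ := by
      simp [Metric.thickening_empty]
    unfold HasDens at hd
    rw [hset] at hd
    have heq : (fun T : ℝ => (volume ((∅ : Set ℝ) ∩ Icc 0 T)).toReal / T)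
        = fun _ : ℝ => (0:ℝ) := by funext T; simp
    rw [heq] at hd
    exact absurd (tendsto_nhds_unique hd tendsto_const_nhds) one_ne_zero
  · have hCc : IsClosed C' := hC'.1
    have hdpos : 0 < infDist y C' := (hCc.notMem_iff_infDist_pos hCne).mp hy
    set d := infDist y C' with hdd
    obtain ⟨m, hm⟩ := hu.exists_dist_lt y (show (0:ℝ) < d/4 by linarith)
    obtain ⟨j, hj⟩ : ∃ j : ℕ, 1 / (j + 1 : ℝ) < d / 4 := by
      obtain ⟨j, hj⟩ := exists_nat_gt (4 / d)
      refine ⟨j, ?_⟩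
      have h1 : 4 / d < (j:ℝ) + 1 := hj.trans (lt_add_one _)
      have h2 : (0:ℝ) < 4 / d := by positivity
      calc 1 / ((j:ℝ) + 1) < 1 / (4 / d) := one_div_lt_one_div_of_lt h2 h1
        _ = d / 4 := one_div_div 4 d
    have hBsub : B m j ⊆ ball y (d/2) := by
      intro z hz
      have h1 : dist z (u m) < 1/(j+1 : ℝ) := mem_ball.mp hz
      have h2 : dist y (u m) < d/4 := hm
      have h3 : dist z y ≤ dist z (u m) + dist (u m) y := dist_triangle _ _ _
      rw [dist_comm] at h2
      rw [mem_ball]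
      linarith
    have hdens := hC'.2 (d/2) (by linarith)
    set S := {t : ℝ | 0 ≤ t ∧ f t x ∈ thickening (d/2) C'} with hS
    have hev : ∀ᶠ T in atTop,
        1 - ε m j / 2 < (volume (S ∩ Icc 0 T)).toReal / T :=
      hdens.eventually (eventually_gt_nhds (by linarith [εpos m j]))
    rw [eventually_atTop] at hev
    obtain ⟨T₀, hT₀⟩ := hev
    have hxW := hx m j ⌈T₀⌉₊
    simp only [hW, mem_iUnion] at hxW
    obtain ⟨T, hTk, hTlt⟩ := hxW
    have hTT₀ : T₀ ≤ T :=
      le_trans (Nat.le_ceil T₀) (le_trans (le_max_left _ _) hTk)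
    have hT1 : (1:ℝ) ≤ T := le_trans (le_max_right _ _) hTk
    have hT0 : (0:ℝ) < T := lt_of_lt_of_le one_pos hT1
    have h5 := hT₀ T hTT₀
    have hMm : MeasurableSet ({t : ℝ | f (max t 0) x ∈ B m j} ∩ Icc 0 T) :=
      (SigAux.isOpen_mset hf x isOpen_ball).measurableSet.inter measurableSet_Icc
    have hsub2 : S ∩ Icc 0 T ⊆
        Icc 0 T \ ({t : ℝ | f (max t 0) x ∈ B m j} ∩ Icc 0 T) := by
      rintro t ⟨⟨ht0, hthick⟩, htI⟩
      refine ⟨htI, fun hmem => ?_⟩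
      have hball : f t x ∈ ball y (d/2) := by
        have := hBsub hmem.1
        rwa [max_eq_left ht0] at this
      have h6 : infDist (f t x) C' < d/2 :=
        (mem_thickening_iff_infDist_lt hCne).mp hthick
      have h7 : dist y (f t x) < d/2 := by
        rw [dist_comm]; exact mem_ball.mp hball
      have h8 : d ≤ infDist (f t x) C' + dist y (f t x) := infDist_le_infDist_add_dist
      linarith
    have hIccfin : volume (Icc (0:ℝ) T) ≠ ⊤ := by
      rw [Real.volume_Icc]; exact ENNReal.ofReal_ne_top
    have h8 : volume (S ∩ Icc 0 T) ≤ volume (Icc (0:ℝ) T)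
        - volume ({t : ℝ | f (max t 0) x ∈ B m j} ∩ Icc 0 T) := by
      rw [← measure_diff inter_subset_right hMm.nullMeasurableSet
        (SigAux.vol_inter_ne_top _ _)]
      exact measure_mono hsub2
    have h8' := ENNReal.toReal_mono
      ((tsub_le_self.trans_lt hIccfin.lt_top).ne) h8
    rw [ENNReal.toReal_sub_of_le (measure_mono inter_subset_right) hIccfin,
      Real.volume_Icc, sub_zero, ENNReal.toReal_ofReal (by linarith)] at h8'
    have hfrac : (1 - ε m j / 2) * T < (volume (S ∩ Icc 0 T)).toReal :=
      (lt_div_iff₀ hT0).mp h5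
    simp only [mem_setOf_eq] at hTlt
    unfold SigAux.mvol at hTlt
    nlinarith [hfrac, h8', hTlt]
end
end

section
/- Let T : X → X be a continuous map of a Polish space X. If there exists x̂ ∈ X such that the minimal center of attraction of the orbit of x̂ equals X, then the set of points x ∈ X whose minimal center of attraction equals X is residual in X. -/
open MeasureTheory Filter Metric Set Topology
open scoped Classical

noncomputable section

/-- Discrete-time center of attraction. -/
def IsCtrD {X : Type*} [MetricSpace X] (T : X → X) (x : X) (C : Set X) : Prop :=
  IsClosed C ∧ ∀ ε > (0 : ℝ),
    Filter.Tendsto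
      (fun N : ℕ =>
        (((Finset.range N).filter (fun n : ℕ => T^[n] x ∈ Metric.thickening ε C)).card : ℝ) / N)
      Filter.atTop (nhds 1)

/-- Discrete-time minimal center of attraction. -/
def IsMCAD {X : Type*} [MetricSpace X] (T : X → X) (x : X) (C : Set X) : Prop :=
  IsCtrD T x C ∧ ∀ C' ⊆ C, IsCtrD T x C' → C' = C

namespace SigmundAux

variable {X : Type*} [MetricSpace X]

/-- Number of times the orbit of `x` up to time `N` visits `U`. -/
def cnt (T : X → X) (U : Set X) (N : ℕ) (x : X) : ℕ :=
  ((Finset.range N).filter (fun n => T^[n] x ∈ U)).card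

lemma cnt_le (T : X → X) (U : Set X) (N : ℕ) (x : X) : cnt T U N x ≤ N :=
  le_trans (Finset.card_filter_le _ _) (by simp)

lemma isOpen_cnt_gt (T : X → X) (hT : Continuous T) {U : Set X} (hU : IsOpen U)
    (N m : ℕ) : IsOpen {x : X | N < m * cnt T U N x} := by
  rw [isOpen_iff_mem_nhds]
  intro x hx
  set s := (Finset.range N).filter (fun n => T^[n] x ∈ U) with hs
  have hV : IsOpen (⋂ n ∈ s, (fun y => T^[n] y) ⁻¹' U) :=
    isOpen_biInter_finset fun n _ => hU.preimage (hT.iterate n)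
  refine Filter.mem_of_superset (hV.mem_nhds ?_) ?_
  · simp only [Set.mem_iInter, Set.mem_preimage]
    intro n hn; exact (Finset.mem_filter.mp hn).2
  · intro y hy
    simp only [Set.mem_iInter, Set.mem_preimage] at hy
    have hsub : s ⊆ (Finset.range N).filter (fun n => T^[n] y ∈ U) := fun n hn =>
      Finset.mem_filter.mpr ⟨(Finset.mem_filter.mp hn).1, hy n hn⟩
    have hcard := Finset.card_le_card hsub
    calc N < m * cnt T U N x := hx
      _ ≤ m * cnt T U N y := Nat.mul_le_mul_left m hcard

/-- From minimality of the whole space, each nonempty open set is visited with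
positive upper density. -/
lemma exists_m (T : X → X) {U : Set X} (hUo : IsOpen U) (hne : U.Nonempty)
    {xhat : X} (hxhat : IsMCAD T xhat Set.univ) :
    ∃ m : ℕ, ∀ N₀ : ℕ, ∃ N ≥ N₀, N < m * cnt T U N xhat := by
  by_contra h
  push_neg at h
  -- h : ∀ m, ∃ N₀, ∀ N ≥ N₀, m * cnt ≤ N
  have h0 : Tendsto (fun N : ℕ => (cnt T U N xhat : ℝ) / N) atTop (nhds 0) := by
    rw [Metric.tendsto_atTop]
    intro ε hε
    obtain ⟨m, hm⟩ := exists_nat_one_div_lt hε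
    obtain ⟨N₀, hN₀⟩ := h (m + 1)
    refine ⟨max N₀ 1, fun N hN => ?_⟩
    have h1 : (1 : ℕ) ≤ N := le_trans (le_max_right _ _) hN
    have h2 : (m + 1) * cnt T U N xhat ≤ N := hN₀ N (le_trans (le_max_left _ _) hN)
    have hNpos : (0 : ℝ) < N := by exact_mod_cast h1
    have hle : (cnt T U N xhat : ℝ) / N ≤ 1 / (m + 1) := by
      rw [div_le_div_iff₀ hNpos (by positivity)]
      have : ((m + 1) * cnt T U N xhat : ℝ) ≤ N := by exact_mod_cast h2
      push_cast at this ⊢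
      linarith
    have hge : (0 : ℝ) ≤ (cnt T U N xhat : ℝ) / N := by positivity
    rw [Real.dist_eq]
    rw [abs_sub_lt_iff]
    constructor
    · have : (1 : ℝ) / (m + 1) < ε := by exact_mod_cast hm
      linarith
    · linarith
  -- Then `Uᶜ` is a center of attraction, contradicting minimality.
  have hc : IsCtrD T xhat Uᶜ := by
    refine ⟨hUo.isClosed_compl, fun ε hε => ?_⟩
    have hl : Tendsto (fun N : ℕ => 1 - (cnt T U N xhat : ℝ) / N) atTop (nhds 1) := by
      have := (tendsto_const_nhds (x := (1 : ℝ)) (f := atTop (α := ℕ))).sub h0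
      simpa using this
    refine tendsto_of_tendsto_of_tendsto_of_le_of_le' hl tendsto_const_nhds ?_ ?_
    · filter_upwards [eventually_ge_atTop 1] with N hN
      have hNpos : (0 : ℝ) < N := by exact_mod_cast hN
      have hkey : N ≤ cnt T U N xhat +
          ((Finset.range N).filter (fun n => T^[n] xhat ∈ Metric.thickening ε Uᶜ)).card := by
        have hsplit : ((Finset.range N).filter (fun n => T^[n] xhat ∈ U)).card +
            ((Finset.range N).filter (fun n => ¬ (T^[n] xhat ∈ U))).card = N := by
          rw [Finset.card_filter_add_card_filter_not]
          simp
        have hsub : ((Finset.range N).filter (fun n => ¬ (T^[n] xhat ∈ U))) ⊆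
            ((Finset.range N).filter (fun n => T^[n] xhat ∈ Metric.thickening ε Uᶜ)) := by
          intro n hn
          rw [Finset.mem_filter] at hn ⊢
          exact ⟨hn.1, Metric.self_subset_thickening hε Uᶜ hn.2⟩
        have := Finset.card_le_card hsub
        unfold cnt
        omega
      rw [sub_le_iff_le_add, ← add_div, le_div_iff₀ hNpos, one_mul]
      have : (N : ℝ) ≤ ((((Finset.range N).filter
          (fun n => T^[n] xhat ∈ Metric.thickening ε Uᶜ)).card : ℕ) : ℝ) +
          (cnt T U N xhat : ℝ) := by
        exact_mod_cast by omega
      linarith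
    · filter_upwards [eventually_ge_atTop 1] with N hN
      have hNpos : (0 : ℝ) < N := by exact_mod_cast hN
      rw [div_le_one hNpos]
      exact_mod_cast le_trans (Finset.card_filter_le _ _) (by simp)
  have heq := hxhat.2 Uᶜ (Set.subset_univ _) hc
  obtain ⟨u, hu⟩ := hne
  have : u ∈ (Uᶜ : Set X) := heq ▸ Set.mem_univ u
  exact this hu

/-- Positive upper density of visits survives shifting along the orbit. -/
lemma shift_mem (T : X → X) (U : Set X) {xhat : X} {m : ℕ}
    (hm : ∀ N₀ : ℕ, ∃ N ≥ N₀, N < m * cnt T U N xhat) (j N₀ : ℕ) :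
    ∃ N ≥ N₀, N < 2 * m * cnt T U N (T^[j] xhat) := by
  obtain ⟨M, hM1, hM2⟩ := hm (max (N₀ + j) (2 * (m * j) + j))
  have h1 : N₀ + j ≤ M := le_trans (le_max_left _ _) hM1
  have h2 : 2 * (m * j) + j ≤ M := le_trans (le_max_right _ _) hM1
  set N := M - j with hN
  set y := T^[j] xhat with hy
  refine ⟨N, by omega, ?_⟩
  have hcount : cnt T U M xhat ≤ j + cnt T U N y := by
    have hsub : (Finset.range M).filter (fun n => T^[n] xhat ∈ U) ⊆
        Finset.range j ∪ ((Finset.range N).filter (fun n => T^[n] y ∈ U)).image (· + j) := by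
      intro i hi
      rw [Finset.mem_filter, Finset.mem_range] at hi
      rcases lt_or_ge i j with hij | hij
      · exact Finset.mem_union_left _ (Finset.mem_range.mpr hij)
      · refine Finset.mem_union_right _ (Finset.mem_image.mpr ⟨i - j, ?_, by omega⟩)
        rw [Finset.mem_filter, Finset.mem_range]
        constructor
        · omega
        · have : T^[i - j] y = T^[i] xhat := by
            rw [hy, ← Function.iterate_add_apply]
            congr 1; omega
          rw [this]; exact hi.2
    calc cnt T U M xhat ≤ (Finset.range j ∪
          ((Finset.range N).filter (fun n => T^[n] y ∈ U)).image (· + j)).card :=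
        Finset.card_le_card hsub
      _ ≤ j + cnt T U N y := by
        refine le_trans (Finset.card_union_le _ _) ?_
        simp only [Finset.card_range]
        exact Nat.add_le_add_left (Finset.card_image_le) j
  have h3 : m * cnt T U M xhat ≤ m * j + m * cnt T U N y := by
    calc m * cnt T U M xhat ≤ m * (j + cnt T U N y) := Nat.mul_le_mul_left m hcount
      _ = m * j + m * cnt T U N y := Nat.mul_add m j _
  have h4 : 2 * m * cnt T U N y = 2 * (m * cnt T U N y) := by ring
  rw [h4]
  set A := m * cnt T U M xhat
  set B := m * cnt T U N y
  set C := m * j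
  omega

end SigmundAux

open SigmundAux in
theorem sigmund_conjecture_discrete {X : Type*} [MetricSpace X]
    [TopologicalSpace.SeparableSpace X] [CompleteSpace X]
    (T : X → X) (hT : Continuous T) (xhat : X) (hxhat : IsMCAD T xhat (Set.univ : Set X)) :
    {x : X | IsMCAD T x (Set.univ : Set X)} ∈ residual X := by
  obtain ⟨b, hbc, hbne, hbasis⟩ := TopologicalSpace.exists_countable_basis X
  have hUo : ∀ U ∈ b, IsOpen U := fun U hU => hbasis.isOpen hU
  have hUne : ∀ U ∈ b, U.Nonempty := fun U hU =>
    Set.nonempty_iff_ne_empty.mpr (fun h => hbne (h ▸ hU))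
  choose m hm using fun (U : b) => exists_m T (hUo U U.2) (hUne U U.2) hxhat
  set A : Set X := ⋂ (U : b) (N₀ : ℕ), {x | ∃ N ≥ N₀, N < 2 * m U * cnt T U N x} with hA_def
  -- The orbit of `xhat` is contained in `A`
  have horbit : ∀ j : ℕ, T^[j] xhat ∈ A := by
    intro j
    simp only [hA_def, Set.mem_iInter, Set.mem_setOf_eq]
    intro U N₀
    exact shift_mem T U (hm U) j N₀
  -- `A` is residual
  have hA : A ∈ residual X := by
    haveI : Countable b := hbc.to_subtype
    refine countable_iInter_mem.mpr fun U => countable_iInter_mem.mpr fun N₀ => ?_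
    refine residual_of_dense_open ?_ ?_
    · have : {x : X | ∃ N ≥ N₀, N < 2 * m U * cnt T ↑U N x} =
          ⋃ (N : ℕ) (_ : N ≥ N₀), {x : X | N < 2 * m U * cnt T ↑U N x} := by
        ext x; simp [Set.mem_iUnion]
      rw [this]
      exact isOpen_iUnion fun N => isOpen_iUnion fun _ => isOpen_cnt_gt T hT (hUo U U.2) N _
    · rw [dense_iff_inter_open]
      intro V hVo hVne
      obtain ⟨v, hv⟩ := hVne
      obtain ⟨W, hWb, hvW, hWV⟩ := hbasis.exists_subset_of_mem_open hv hVo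
      -- the orbit of xhat visits W
      obtain ⟨N, _, hN⟩ := hm ⟨W, hWb⟩ 1
      have hcpos : 0 < cnt T W N xhat := by
        by_contra hc
        push_neg at hc
        interval_cases h : cnt T W N xhat <;> omega
      obtain ⟨n, hn⟩ := Finset.card_pos.mp hcpos
      rw [Finset.mem_filter] at hn
      refine ⟨T^[n] xhat, hWV hn.2, ?_⟩
      have := horbit n
      simp only [hA_def, Set.mem_iInter] at this
      exact this U N₀
  refine Filter.mem_of_superset hA ?_
  intro x hx
  simp only [hA_def, Set.mem_iInter, Set.mem_setOf_eq] at hx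
  simp only [Set.mem_setOf_eq]
  constructor
  -- `univ` is a center of attraction
  · refine ⟨isClosed_univ, fun ε hε => ?_⟩
    have hthick : Metric.thickening ε (Set.univ : Set X) = Set.univ := by
      apply Set.eq_univ_of_univ_subset
      exact Metric.self_subset_thickening hε _
    have : ∀ N : ℕ, ((Finset.range N).filter
        (fun n : ℕ => T^[n] x ∈ Metric.thickening ε (Set.univ : Set X))).card = N := by
      intro N
      rw [hthick]
      simp
    refine Tendsto.congr' ?_ tendsto_const_nhds
    filter_upwards [eventually_ge_atTop 1] with N hN
    rw [this N, div_self]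
    exact_mod_cast Nat.one_le_iff_ne_zero.mp hN
  -- minimality
  · intro C' _ hC'
    by_contra hne
    obtain ⟨p, hp⟩ := (Set.ne_univ_iff_exists_notMem C').mp hne
    -- C' is nonempty
    have hC'ne : C'.Nonempty := by
      rcases Set.eq_empty_or_nonempty C' with h | h
      · exfalso
        have h1 := hC'.2 1 one_pos
        have : ∀ N : ℕ, ((Finset.range N).filter
            (fun n : ℕ => T^[n] x ∈ Metric.thickening 1 C')).card = 0 := by
          intro N
          rw [h, Metric.thickening_empty]
          simp
        have h2 : Tendsto (fun N : ℕ => (((Finset.range N).filter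
            (fun n : ℕ => T^[n] x ∈ Metric.thickening 1 C')).card : ℝ) / N) atTop (nhds 0) := by
          refine Tendsto.congr' ?_ tendsto_const_nhds
          filter_upwards with N
          rw [this N]; simp
        have := tendsto_nhds_unique h1 h2
        norm_num at this
      · exact h
    have hr : 0 < Metric.infDist p C' :=
      (hC'.1.notMem_iff_infDist_pos hC'ne).mp hp
    set r := Metric.infDist p C' with hrdef
    set ε := r / 3 with hεdef
    have hεpos : 0 < ε := by positivity
    -- find a basic open set inside ball p ε, disjoint from the thickening
    obtain ⟨W, hWb, hpW, hWball⟩ := hbasis.exists_subset_of_mem_open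
      (Metric.mem_ball_self hεpos) Metric.isOpen_ball
    have hdisjW : ∀ y ∈ W, y ∉ Metric.thickening ε C' := by
      intro y hy hythick
      have hyball : dist y p < ε := hWball hy
      have hyinf : Metric.infDist y C' < ε := (Metric.mem_thickening_iff_infDist_lt hC'ne).mp hythick
      have htri : Metric.infDist p C' ≤ Metric.infDist y C' + dist p y :=
        Metric.infDist_le_infDist_add_dist
      rw [dist_comm] at hyball
      have : r < ε + ε := by
        calc r ≤ Metric.infDist y C' + dist p y := htri
          _ < ε + ε := by linarith
      rw [hεdef] at this
      linarith
    -- now use the density information for W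
    set k := 2 * m ⟨W, hWb⟩ with hkdef
    have hkx : ∀ N₀ : ℕ, ∃ N ≥ N₀, N < k * cnt T W N x := hx ⟨W, hWb⟩
    have htend := hC'.2 ε hεpos
    rw [Metric.tendsto_atTop] at htend
    obtain ⟨N₁, hN₁⟩ := htend (1 / (k + 1)) (by positivity)
    obtain ⟨N, hNge, hNlt⟩ := hkx (max N₁ 1)
    have hN1 : N₁ ≤ N := le_trans (le_max_left _ _) hNge
    have hNpos : 1 ≤ N := le_trans (le_max_right _ _) hNge
    set a := ((Finset.range N).filter (fun n : ℕ => T^[n] x ∈ Metric.thickening ε C')).card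
      with hadef
    -- cnt W + a ≤ N
    have hdisj : Disjoint ((Finset.range N).filter (fun n => T^[n] x ∈ W))
        ((Finset.range N).filter (fun n => T^[n] x ∈ Metric.thickening ε C')) := by
      rw [Finset.disjoint_filter]
      intro n _ hnW
      exact hdisjW _ hnW
    have hsum : cnt T W N x + a ≤ N := by
      have := Finset.card_union_of_disjoint hdisj
      have hle : (((Finset.range N).filter (fun n => T^[n] x ∈ W)) ∪
          ((Finset.range N).filter (fun n => T^[n] x ∈ Metric.thickening ε C'))).card ≤ N := by
        have hsubR : (((Finset.range N).filter (fun n => T^[n] x ∈ W)) ∪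
            ((Finset.range N).filter (fun n => T^[n] x ∈ Metric.thickening ε C'))) ⊆
            Finset.range N := by
          intro i hi
          rcases Finset.mem_union.mp hi with h | h
          · exact (Finset.mem_filter.mp h).1
          · exact (Finset.mem_filter.mp h).1
        have := Finset.card_le_card hsubR
        rwa [Finset.card_range] at this
      rw [this] at hle
      exact hle
    -- real arithmetic contradiction
    have haN : a ≤ N := le_trans (Finset.card_filter_le _ _) (by simp)
    have hdist := hN₁ N hN1
    rw [Real.dist_eq, abs_sub_lt_iff] at hdist
    have hNR : (1 : ℝ) ≤ N := by exact_mod_cast hNpos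
    have hNRpos : (0 : ℝ) < N := by linarith
    have hfrac : (1 : ℝ) - 1 / (k + 1) < (a : ℝ) / N := by linarith [hdist.2]
    have ha' : (N : ℝ) - (N : ℝ) / (k + 1) < a := by
      have h5 : ((1 : ℝ) - 1 / (k + 1)) * N < a := (lt_div_iff₀ hNRpos).mp hfrac
      calc (N : ℝ) - (N : ℝ) / (k + 1) = ((1 : ℝ) - 1 / (k + 1)) * N := by ring
        _ < a := h5
    have hcntlt : (N : ℝ) < k * ((N : ℝ) - a) := by
      have h6 : (N : ℝ) < (k : ℝ) * cnt T W N x := by exact_mod_cast hNlt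
      have h7 : (cnt T W N x : ℝ) ≤ (N : ℝ) - a := by
        have : (cnt T W N x + a : ℕ) ≤ N := hsum
        have := (Nat.cast_le (α := ℝ)).mpr this
        push_cast at this
        linarith
      have hk0 : (0 : ℝ) ≤ k := by positivity
      nlinarith
    have hkpos : (0 : ℝ) < (k : ℝ) + 1 := by positivity
    -- N - a < N / (k+1), so k (N - a) < k N/(k+1) ≤ N
    have hNa : (N : ℝ) - a < (N : ℝ) / (k + 1) := by linarith
    have hfinal : (k : ℝ) * ((N : ℝ) - a) < (N : ℝ) := by
      have hk0 : (0 : ℝ) ≤ k := by positivity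
      have h8 : (k : ℝ) * ((N : ℝ) - a) ≤ (k : ℝ) * ((N : ℝ) / (k + 1)) := by
        rcases eq_or_lt_of_le hk0 with h | h
        · rw [← h]; simp
        · exact le_of_lt (by exact mul_lt_mul_of_pos_left hNa h)
      have h9 : (k : ℝ) * ((N : ℝ) / (k + 1)) ≤ N := by
        rw [mul_div_assoc']
        rw [div_le_iff₀ hkpos]
        nlinarith
      linarith
    linarith
end
end

section
/- Let f : ℝ₊ × X → X be a continuous semiflow on a compact metric space X and x ∈ X. If the minimal center of attraction C_x is not generic (i.e., there is no point y with C_y = C_x), then for every nonempty closed f-invariant subset Δ ⊆ C_x there exists q ∈ Δ such that (x, q) is a Li–Yorke chaotic pair: liminf_{t→∞} d(f(t,x), f(t,q)) = 0 and limsup_{t→∞} d(f(t,x), f(t,q)) > 0. -/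
open MeasureTheory Filter Metric Set Topology
open scoped Classical

noncomputable section

/-- A superset (up to a bounded initial segment) of a density-one set has density one. -/
lemma hasDens_one_of_superset {S S' : Set ℝ} (h : HasDens S 1) (T₀ : ℝ)
    (hsub : S ∩ Set.Ici T₀ ⊆ S') : HasDens S' 1 := by
  set M := max T₀ 0 with hM
  have hM0 : (0:ℝ) ≤ M := le_max_right _ _
  have key : ∀ T : ℝ, 1 ≤ T →
      ((volume (S ∩ Icc 0 T)).toReal / T - M / T ≤ (volume (S' ∩ Icc 0 T)).toReal / T
        ∧ (volume (S' ∩ Icc 0 T)).toReal / T ≤ 1) := by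
    intro T hT
    have hT0 : (0:ℝ) < T := lt_of_lt_of_le one_pos hT
    have hb_le : volume (S' ∩ Icc 0 T) ≤ ENNReal.ofReal T := by
      calc volume (S' ∩ Icc 0 T) ≤ volume (Icc (0:ℝ) T) := measure_mono inter_subset_right
        _ = ENNReal.ofReal T := by rw [Real.volume_Icc, sub_zero]
    have hbne : volume (S' ∩ Icc 0 T) ≠ ⊤ :=
      (lt_of_le_of_lt hb_le ENNReal.ofReal_lt_top).ne
    have hsubset : S ∩ Icc 0 T ⊆ (S' ∩ Icc 0 T) ∪ Icc 0 M := by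
      rintro t ⟨htS, ht0, htT⟩
      by_cases hge : T₀ ≤ t
      · exact Or.inl ⟨hsub ⟨htS, hge⟩, ht0, htT⟩
      · exact Or.inr ⟨ht0, le_trans (le_of_lt (not_le.1 hge)) (le_max_left _ _)⟩
    have ha_le : volume (S ∩ Icc 0 T) ≤ volume (S' ∩ Icc 0 T) + ENNReal.ofReal M := by
      calc volume (S ∩ Icc 0 T) ≤ volume ((S' ∩ Icc 0 T) ∪ Icc 0 M) := measure_mono hsubset
        _ ≤ volume (S' ∩ Icc 0 T) + volume (Icc (0:ℝ) M) := measure_union_le _ _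
        _ = volume (S' ∩ Icc 0 T) + ENNReal.ofReal M := by rw [Real.volume_Icc, sub_zero]
    have ha_le' : (volume (S ∩ Icc 0 T)).toReal ≤ (volume (S' ∩ Icc 0 T)).toReal + M := by
      have hfin : volume (S' ∩ Icc 0 T) + ENNReal.ofReal M ≠ ⊤ :=
        ENNReal.add_ne_top.2 ⟨hbne, ENNReal.ofReal_ne_top⟩
      have h2 := ENNReal.toReal_mono hfin ha_le
      rwa [ENNReal.toReal_add hbne ENNReal.ofReal_ne_top, ENNReal.toReal_ofReal hM0] at h2
    have hb' : (volume (S' ∩ Icc 0 T)).toReal ≤ T := by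
      have h2 := ENNReal.toReal_mono ENNReal.ofReal_ne_top hb_le
      rwa [ENNReal.toReal_ofReal hT0.le] at h2
    constructor
    · rw [← sub_div]
      exact (div_le_div_iff_of_pos_right hT0).2 (by linarith)
    · calc (volume (S' ∩ Icc 0 T)).toReal / T ≤ T / T := (div_le_div_iff_of_pos_right hT0).2 hb'
        _ = 1 := div_self hT0.ne'
  have h1 : Tendsto (fun T => (volume (S ∩ Icc 0 T)).toReal / T - M / T) atTop (𝓝 1) := by
    have h2 : Tendsto (fun T : ℝ => M / T) atTop (𝓝 0) :=
      tendsto_const_nhds.div_atTop tendsto_id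
    simpa using h.sub h2
  refine tendsto_of_tendsto_of_tendsto_of_le_of_le' h1 tendsto_const_nhds ?_ ?_
  · filter_upwards [eventually_ge_atTop 1] with T hT using (key T hT).1
  · filter_upwards [eventually_ge_atTop 1] with T hT using (key T hT).2

/-- If the motions of `x` and `q` are eventually uniformly close, any center of
attraction of `x` is a center of attraction of `q`. -/
lemma isCtr_transfer {X : Type*} [MetricSpace X] (f : ℝ → X → X) (x q : X)
    (hclose : ∀ ε > (0:ℝ), ∃ T : ℝ, ∀ t ≥ T, dist (f t x) (f t q) < ε)
    (C' : Set X) (h : IsCtr f x C') : IsCtr f q C' := by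
  refine ⟨h.1, fun ε hε => ?_⟩
  obtain ⟨T, hT⟩ := hclose (ε/2) (by positivity)
  apply hasDens_one_of_superset (h.2 (ε/2) (by positivity)) T
  rintro t ⟨⟨ht0, htx⟩, htT⟩
  refine ⟨ht0, ?_⟩
  rw [Metric.mem_thickening_iff] at htx ⊢
  obtain ⟨z, hz, hd⟩ := htx
  refine ⟨z, hz, ?_⟩
  have h1 := hT t htT
  have h2 := dist_triangle (f t q) (f t x) z
  rw [dist_comm (f t q) (f t x)] at h2
  linarith

/-- Every point of the minimal center of attraction is an ω-limit point of the motion. -/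
lemma mem_omega_of_mem_mca {X : Type*} [MetricSpace X] (f : ℝ → X → X) (x : X) (C : Set X)
    (hC : IsMCA f x C) :
    ∀ z ∈ C, ∀ ε > (0:ℝ), ∀ T : ℝ, ∃ t, T ≤ t ∧ 0 ≤ t ∧ dist (f t x) z < ε := by
  intro z hz ε hε T
  by_contra hcon
  push_neg at hcon
  have hC' : IsCtr f x (C \ ball z (ε/2)) := by
    constructor
    · rw [diff_eq]
      exact hC.1.1.inter (isClosed_compl_iff.2 isOpen_ball)
    · intro δ hδ
      have hδ' : (0:ℝ) < min δ (ε/4) := lt_min hδ (by positivity)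
      apply hasDens_one_of_superset (hC.1.2 (min δ (ε/4)) hδ') T
      rintro t ⟨⟨ht0, htx⟩, htT⟩
      refine ⟨ht0, ?_⟩
      rw [Metric.mem_thickening_iff] at htx ⊢
      obtain ⟨c, hc, hd⟩ := htx
      have hcball : c ∉ ball z (ε/2) := by
        intro hcb
        rw [mem_ball] at hcb
        have h1 := hcon t htT ht0
        have h2 := dist_triangle (f t x) c z
        have h3 : dist (f t x) c < ε/4 := lt_of_lt_of_le hd (min_le_right _ _)
        linarith
      exact ⟨c, ⟨hc, hcball⟩, lt_of_lt_of_le hd (min_le_left _ _)⟩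
  have heq : C \ ball z (ε/2) = C := hC.2 _ diff_subset hC'
  have hmem : z ∈ C \ ball z (ε/2) := heq.symm ▸ hz
  exact hmem.2 (mem_ball_self (by positivity))

/-- Ellis–Numakura for sets of self-maps under composition. -/
lemma exists_idempotent_comp {Y : Type*} [TopologicalSpace Y] [CompactSpace Y] [T2Space Y]
    (A : Set (Y → Y)) (hne : A.Nonempty) (hcl : IsClosed A)
    (hmul : ∀ p ∈ A, ∀ q ∈ A, p ∘ q ∈ A) : ∃ u ∈ A, u ∘ u = u := by
  letI : Semigroup (Y → Y) := { mul := fun g h => g ∘ h, mul_assoc := fun _ _ _ => rfl }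
  have hcont : ∀ r : Y → Y, Continuous (fun g : Y → Y => g * r) :=
    fun r => continuous_pi fun y => continuous_apply (r y)
  obtain ⟨m, hm, hmm⟩ := exists_idempotent_in_compact_subsemigroup hcont A hne
    hcl.isCompact hmul
  exact ⟨m, hm, hmm⟩

theorem liYorke_pair_of_not_generic {X : Type*} [MetricSpace X] [CompactSpace X]
    (f : ℝ → X → X) (hf : IsSemiflow f) (x : X) (C : Set X) (hC : IsMCA f x C)
    (hng : ¬ ∃ y ∈ C, IsMCA f y C) :
    ∀ Δ ⊆ C, Δ.Nonempty → IsClosed Δ → (∀ t : ℝ, 0 ≤ t → ∀ z ∈ Δ, f t z ∈ Δ) →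
      ∃ q ∈ Δ,
        Filter.liminf (fun t : ℝ => dist (f t x) (f t q)) Filter.atTop = 0 ∧
        0 < Filter.limsup (fun t : ℝ => dist (f t x) (f t q)) Filter.atTop := by
  intro Δ hΔC hΔne hΔcl hΔinv
  obtain ⟨hfc, hf0, hfadd⟩ := hf
  -- each time-t map is continuous
  have hct : ∀ t : ℝ, 0 ≤ t → Continuous (fun y : X => f t y) := by
    intro t ht
    rw [← continuousOn_univ]
    have h2 : ContinuousOn (fun y : X => ((t, y) : ℝ × X)) univ :=
      (continuous_const.prodMk continuous_id).continuousOn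
    exact hfc.comp h2 (fun y _ => ⟨ht, mem_univ _⟩)
  set Φ : ℝ → (X → X) := fun t => fun y => f t y with hΦ
  set E : ℝ → Set (X → X) := fun T => closure (Φ '' Ici T) with hE
  set S : Set (X → X) := ⋂ T : ℝ, E T with hS
  have hSE : ∀ T : ℝ, S ⊆ E T := fun T p hp => mem_iInter.1 hp T
  have hScl : IsClosed S := by
    rw [hS]
    exact isClosed_iInter fun T => isClosed_closure
  -- members of S map Δ into Δ
  have hSΔ : ∀ p ∈ S, ∀ z ∈ Δ, p z ∈ Δ := by
    intro p hp z hz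
    have hp0 : p ∈ closure (Φ '' Ici (0:ℝ)) := hSE 0 hp
    have h1 : p z ∈ (fun g : X → X => g z) '' closure (Φ '' Ici (0:ℝ)) := ⟨p, hp0, rfl⟩
    have h2 := image_closure_subset_closure_image (f := fun g : X → X => g z)
      (continuous_apply z) h1
    have h3 : (fun g : X → X => g z) '' (Φ '' Ici (0:ℝ)) ⊆ Δ := by
      rintro _ ⟨_, ⟨t, ht, rfl⟩, rfl⟩
      exact hΔinv t ht z hz
    have h4 := closure_mono h3 h2
    rwa [hΔcl.closure_eq] at h4
  -- S is closed under composition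
  have hSmul : ∀ p ∈ S, ∀ q ∈ S, p ∘ q ∈ S := by
    intro p hp q hq
    rw [hS, mem_iInter]
    intro T
    have h1 : ∀ t : ℝ, 0 ≤ t → (Φ t) ∘ q ∈ E T := by
      intro t ht
      have hΨ : Continuous (fun g : X → X => (Φ t) ∘ g) :=
        continuous_pi fun y => (hct t ht).comp (continuous_apply y)
      have hq' : q ∈ closure (Φ '' Ici (max T 0)) := hSE (max T 0) hq
      have h2 : (Φ t) ∘ q ∈ (fun g : X → X => (Φ t) ∘ g) '' closure (Φ '' Ici (max T 0)) :=
        ⟨q, hq', rfl⟩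
      have h3 := image_closure_subset_closure_image hΨ h2
      have h4 : (fun g : X → X => (Φ t) ∘ g) '' (Φ '' Ici (max T 0)) ⊆ Φ '' Ici T := by
        rintro _ ⟨_, ⟨s, hs, rfl⟩, rfl⟩
        have hs0 : (0:ℝ) ≤ s := le_trans (le_max_right _ _) hs
        refine ⟨t + s, ?_, ?_⟩
        · have hTs : T ≤ s := le_trans (le_max_left _ _) hs
          simp only [mem_Ici]
          linarith
        · funext y
          exact (hfadd t s ht hs0 y).symm
      exact closure_mono h4 h3
    have hρ : Continuous (fun g : X → X => g ∘ q) :=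
      continuous_pi fun y => continuous_apply (q y)
    have hp' : p ∈ closure (Φ '' Ici (0:ℝ)) := hSE 0 hp
    have h2 : p ∘ q ∈ (fun g : X → X => g ∘ q) '' closure (Φ '' Ici (0:ℝ)) := ⟨p, hp', rfl⟩
    have h3 := image_closure_subset_closure_image hρ h2
    have h4 : (fun g : X → X => g ∘ q) '' (Φ '' Ici (0:ℝ)) ⊆ E T := by
      rintro _ ⟨_, ⟨t, ht, rfl⟩, rfl⟩
      exact h1 t ht
    have h5 := closure_mono h4 h3
    rw [hE] at h5 ⊢
    simpa [closure_closure] using h5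
  -- a cluster point of the motion lying over `Δ`
  obtain ⟨z, hz⟩ := hΔne
  have hzC : z ∈ C := hΔC hz
  have homega := mem_omega_of_mem_mca f x C hC z hzC
  set F : Filter ℝ := atTop ⊓ comap (fun t => f t x) (𝓝 z) with hF
  have hFne : F.NeBot := by
    rw [hF, inf_neBot_iff]
    intro s hs s' hs'
    obtain ⟨T, hT⟩ := mem_atTop_sets.1 hs
    obtain ⟨v, hv, hvs⟩ := Filter.mem_comap.1 hs'
    obtain ⟨ε, hε, hball⟩ := Metric.mem_nhds_iff.1 hv
    obtain ⟨t, htT, ht0, hdist⟩ := homega ε hε T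
    exact ⟨t, hT t htT, hvs (hball (mem_ball.2 hdist))⟩
  haveI := hFne
  obtain ⟨p, hp⟩ := exists_clusterPt_of_compactSpace (map Φ F)
  have hpS : p ∈ S := by
    rw [hS, mem_iInter]
    intro T
    have hmem : Φ '' Ici T ∈ map Φ F := by
      rw [mem_map]
      exact mem_of_superset (mem_inf_of_left (Ici_mem_atTop T))
        (subset_preimage_image Φ (Ici T))
    exact mem_closure_iff_clusterPt.2 (hp.mono (le_principal_iff.2 hmem))
  have hpx : p x = z := by
    have h1 : ClusterPt (p x) (map (fun g : X → X => g x) (map Φ F)) :=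
      hp.map (continuous_apply x).continuousAt tendsto_map
    rw [map_map] at h1
    have h2 : map ((fun g : X → X => g x) ∘ Φ) F ≤ 𝓝 z := by
      calc map ((fun g : X → X => g x) ∘ Φ) F
          = map (fun t : ℝ => f t x) F := rfl
        _ ≤ map (fun t : ℝ => f t x) (comap (fun t : ℝ => f t x) (𝓝 z)) :=
            map_mono inf_le_right
        _ ≤ 𝓝 z := map_comap_le
    exact eq_of_nhds_neBot (h1.mono h2)
  -- the idempotent
  obtain ⟨u, huA, huu⟩ := exists_idempotent_comp (S ∩ {g : X → X | g x ∈ Δ})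
    ⟨p, hpS, by simp only [mem_setOf_eq, hpx]; exact hz⟩
    (hScl.inter (hΔcl.preimage (continuous_apply x)))
    (by
      rintro p' ⟨hp'S, hp'x⟩ q' ⟨hq'S, hq'x⟩
      exact ⟨hSmul p' hp'S q' hq'S, hSΔ p' hp'S _ hq'x⟩)
  obtain ⟨huS, hux⟩ := huA
  set q := u x with hq
  have hqΔ : q ∈ Δ := hux
  have huq : u q = q := congrFun huu x
  -- the motions of x and q come together frequently
  have hfreq : ∀ ε > (0:ℝ), ∀ T : ℝ, ∃ t, T ≤ t ∧ dist (f t x) (f t q) < ε := by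
    intro ε hε T
    have huE : u ∈ closure (Φ '' Ici T) := hSE T huS
    have hopen : IsOpen {g : X → X | dist (g x) (g q) < ε} :=
      isOpen_lt (Continuous.dist (continuous_apply x) (continuous_apply q)) continuous_const
    have humem : u ∈ {g : X → X | dist (g x) (g q) < ε} := by
      simp only [mem_setOf_eq]
      rw [← hq, huq, dist_self]
      exact hε
    obtain ⟨g, hgU, hgE⟩ := (_root_.mem_closure_iff.1 huE) _ hopen humem
    obtain ⟨t, htT, rfl⟩ := hgE
    exact ⟨t, htT, hgU⟩
  -- boundedness
  obtain ⟨D, hD⟩ : ∃ D : ℝ, ∀ a b : X, dist a b ≤ D := by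
    obtain ⟨D, hD⟩ := Metric.isBounded_iff.1 (isCompact_univ (X := X)).isBounded
    exact ⟨D, fun a b => hD (mem_univ a) (mem_univ b)⟩
  have hbdd : IsBoundedUnder (· ≤ ·) atTop (fun t : ℝ => dist (f t x) (f t q)) :=
    isBoundedUnder_of ⟨D, fun t => hD _ _⟩
  have hbdd2 : IsBoundedUnder (· ≥ ·) atTop (fun t : ℝ => dist (f t x) (f t q)) :=
    isBoundedUnder_of ⟨0, fun t => dist_nonneg⟩
  refine ⟨q, hqΔ, ?_, ?_⟩
  · -- liminf = 0
    set L := liminf (fun t : ℝ => dist (f t x) (f t q)) atTop with hL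
    have hle : ∀ ε > (0:ℝ), L ≤ ε := by
      intro ε hε
      apply liminf_le_of_frequently_le _ hbdd2
      rw [frequently_atTop]
      intro T
      obtain ⟨t, htT, hd⟩ := hfreq ε hε T
      exact ⟨t, htT, hd.le⟩
    have hge : (0:ℝ) ≤ L :=
      le_liminf_of_le hbdd.isCoboundedUnder_ge
        (Filter.Eventually.of_forall fun t => dist_nonneg)
    have hle0 : L ≤ 0 := by
      by_contra hpos
      push_neg at hpos
      have h2 := hle (L/2) (by linarith)
      linarith
    linarith
  · -- limsup > 0
    by_contra hls
    push_neg at hls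
    have hto : ∀ ε > (0:ℝ), ∃ T : ℝ, ∀ t ≥ T, dist (f t x) (f t q) < ε := by
      intro ε hε
      have h1 := eventually_lt_of_limsup_lt (lt_of_le_of_lt hls hε) hbdd
      rw [eventually_atTop] at h1
      exact h1
    have hto' : ∀ ε > (0:ℝ), ∃ T : ℝ, ∀ t ≥ T, dist (f t q) (f t x) < ε := by
      intro ε hε
      obtain ⟨T, hT⟩ := hto ε hε
      exact ⟨T, fun t ht => by rw [dist_comm]; exact hT t ht⟩
    exact hng ⟨q, hΔC hqΔ, isCtr_transfer f x q hto C hC.1,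
      fun C' hsub' hctr' => hC.2 C' hsub' (isCtr_transfer f q x hto' C' hctr')⟩
end
end

section
/- Let f : ℝ₊ × X → X be a continuous semiflow on a compact metric space and x ∈ X. If C_x is not generic, then x ∉ C_x, and moreover x is proximal to C_x: liminf_{t→∞} d(f(t,x), f(t,C_x)) = 0. -/
open MeasureTheory Filter Metric Set Topology
open scoped Classical

noncomputable section

namespace AuxDens

lemma vol_le (S : Set ℝ) (T : ℝ) : volume (S ∩ Icc 0 T) ≤ ENNReal.ofReal T := by
  calc volume (S ∩ Icc 0 T) ≤ volume (Icc 0 T) := measure_mono inter_subset_right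
    _ = ENNReal.ofReal T := by rw [Real.volume_Icc, sub_zero]

lemma vol_ne_top (S : Set ℝ) (T : ℝ) : volume (S ∩ Icc 0 T) ≠ ⊤ :=
  ne_top_of_le_ne_top ENNReal.ofReal_ne_top (vol_le S T)

lemma toReal_le (S : Set ℝ) {T : ℝ} (hT : 0 ≤ T) :
    (volume (S ∩ Icc 0 T)).toReal ≤ T := by
  calc (volume (S ∩ Icc 0 T)).toReal
      ≤ (ENNReal.ofReal T).toReal := ENNReal.toReal_mono ENNReal.ofReal_ne_top (vol_le S T)
    _ = T := ENNReal.toReal_ofReal hT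

lemma dens_le_one {S : Set ℝ} {T : ℝ} (hT : 0 < T) :
    (volume (S ∩ Icc 0 T)).toReal / T ≤ 1 := by
  rw [div_le_one hT]; exact toReal_le S hT.le

lemma hasDens_of_lo {S : Set ℝ} {lo : ℝ → ℝ}
    (hle : ∀ᶠ T in atTop, lo T ≤ (volume (S ∩ Icc 0 T)).toReal / T)
    (hlo : Tendsto lo atTop (nhds 1)) : HasDens S 1 := by
  refine tendsto_of_tendsto_of_tendsto_of_le_of_le' hlo tendsto_const_nhds hle ?_
  filter_upwards [eventually_gt_atTop 0] with T hT
  exact dens_le_one hT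

lemma hasDens_mono {S S' : Set ℝ} (hsub : S ⊆ S') (h : HasDens S 1) : HasDens S' 1 := by
  refine hasDens_of_lo ?_ h
  filter_upwards [eventually_gt_atTop 0] with T hT
  exact (div_le_div_iff_of_pos_right hT).2
    (ENNReal.toReal_mono (vol_ne_top S' T) (measure_mono (inter_subset_inter_left _ hsub)))

lemma hasDens_exists_ge {S : Set ℝ} (h : HasDens S 1) (a : ℝ) : ∃ t ∈ S, a ≤ t := by
  by_contra hcon
  push_neg at hcon
  have h0 : Tendsto (fun T : ℝ => (volume (S ∩ Icc 0 T)).toReal / T) atTop (nhds 0) := by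
    refine tendsto_of_tendsto_of_tendsto_of_le_of_le' tendsto_const_nhds
      (tendsto_const_nhds.div_atTop tendsto_id (f := fun _ : ℝ => max a 0)) ?_ ?_
    · filter_upwards [eventually_gt_atTop 0] with T hT
      positivity
    · filter_upwards [eventually_gt_atTop 0] with T hT
      have hsub : S ∩ Icc 0 T ⊆ Icc 0 (max a 0) := by
        rintro t ⟨htS, ht0, -⟩
        exact ⟨ht0, le_max_of_le_left (hcon t htS).le⟩
      have : volume (S ∩ Icc 0 T) ≤ ENNReal.ofReal (max a 0) := by
        calc volume (S ∩ Icc 0 T) ≤ volume (Icc 0 (max a 0)) := measure_mono hsub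
          _ = ENNReal.ofReal (max a 0) := by rw [Real.volume_Icc, sub_zero]
      have h2 : (volume (S ∩ Icc 0 T)).toReal ≤ max a 0 := by
        calc (volume (S ∩ Icc 0 T)).toReal ≤ (ENNReal.ofReal (max a 0)).toReal :=
              ENNReal.toReal_mono ENNReal.ofReal_ne_top this
          _ = max a 0 := ENNReal.toReal_ofReal (le_max_right a 0)
      simp only [id_eq]
      exact (div_le_div_iff_of_pos_right hT).2 h2
  exact one_ne_zero (tendsto_nhds_unique h h0)

lemma hasDens_translate {S : Set ℝ} {s : ℝ} (hs : 0 ≤ s)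
    (h : HasDens S 1) : HasDens ((fun u => s + u) '' S) 1 := by
  refine hasDens_of_lo (lo := fun T => (volume (S ∩ Icc 0 T)).toReal / T - s / T) ?_ ?_
  · filter_upwards [eventually_ge_atTop (max s 1)] with T hT
    have hTs : s ≤ T := le_trans (le_max_left s 1) hT
    have hT1 : (0:ℝ) < T := lt_of_lt_of_le (by norm_num) (le_trans (le_max_right s 1) hT)
    have himg : (fun u => s + u) '' (S ∩ Icc 0 (T - s)) ⊆ ((fun u => s + u) '' S) ∩ Icc 0 T := by
      rintro _ ⟨u, ⟨huS, hu0, huT⟩, rfl⟩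
      refine ⟨⟨u, huS, rfl⟩, ?_, ?_⟩
      · show (0:ℝ) ≤ s + u; linarith
      · show s + u ≤ T; linarith
    have heq : volume ((fun u => s + u) '' (S ∩ Icc 0 (T - s))) = volume (S ∩ Icc 0 (T - s)) := by
      have : (fun u => s + u) '' (S ∩ Icc 0 (T - s)) = (fun z => -s + z) ⁻¹' (S ∩ Icc 0 (T - s)) := by
        ext z
        constructor
        · rintro ⟨u, hu, rfl⟩
          have huu : -s + (s + u) = u := by ring
          rw [mem_preimage, huu]; exact hu
        · intro hz; exact ⟨-s + z, hz, by ring⟩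
      rw [this, measure_preimage_add]
    have hsum : volume (S ∩ Icc 0 T) ≤ volume (S ∩ Icc 0 (T - s)) + ENNReal.ofReal s := by
      have hsub : S ∩ Icc 0 T ⊆ (S ∩ Icc 0 (T - s)) ∪ Icc (T - s) T := by
        rintro t ⟨htS, ht0, htT⟩
        rcases le_or_gt t (T - s) with hle | hlt
        · exact Or.inl ⟨htS, ht0, hle⟩
        · exact Or.inr ⟨hlt.le, htT⟩
      calc volume (S ∩ Icc 0 T) ≤ volume ((S ∩ Icc 0 (T - s)) ∪ Icc (T - s) T) := measure_mono hsub
        _ ≤ volume (S ∩ Icc 0 (T - s)) + volume (Icc (T - s) T) := measure_union_le _ _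
        _ = volume (S ∩ Icc 0 (T - s)) + ENNReal.ofReal s := by
            rw [Real.volume_Icc]; ring_nf
    have hfin1 := vol_ne_top S (T - s)
    have htr : (volume (S ∩ Icc 0 T)).toReal ≤ (volume (S ∩ Icc 0 (T - s))).toReal + s := by
      have := ENNReal.toReal_mono (by
          exact ENNReal.add_ne_top.2 ⟨hfin1, ENNReal.ofReal_ne_top⟩) hsum
      rwa [ENNReal.toReal_add hfin1 ENNReal.ofReal_ne_top, ENNReal.toReal_ofReal hs] at this
    have hge : (volume (S ∩ Icc 0 (T - s))).toReal
        ≤ (volume (((fun u => s + u) '' S) ∩ Icc 0 T)).toReal := by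
      rw [← heq]
      exact ENNReal.toReal_mono (vol_ne_top _ T) (measure_mono himg)
    rw [div_sub_div_same]
    gcongr
    linarith
  · have h2 : Tendsto (fun T : ℝ => s / T) atTop (nhds 0) :=
      tendsto_const_nhds.div_atTop tendsto_id
    have := h.sub h2
    simpa using this

lemma hasDens_inter {S₁ S₂ S' : Set ℝ} (h₁m : MeasurableSet S₁)
    (h₁ : HasDens S₁ 1) (h₂ : HasDens S₂ 1) (hsub : S₁ ∩ S₂ ⊆ S') : HasDens S' 1 := by
  refine hasDens_of_lo (lo := fun T => (volume (S₁ ∩ Icc 0 T)).toReal / T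
      + (volume (S₂ ∩ Icc 0 T)).toReal / T - 1) ?_ ?_
  · filter_upwards [eventually_gt_atTop 0] with T hT
    set I := Icc (0:ℝ) T with hI
    have hfin : ∀ A : Set ℝ, A ⊆ I → volume A ≠ ⊤ := fun A hA =>
      ne_top_of_le_ne_top ENNReal.ofReal_ne_top
        (le_trans (measure_mono hA) (by rw [Real.volume_Icc, sub_zero]))
    have e1 : volume (S₂ ∩ I ∩ S₁) + volume ((S₂ ∩ I) \ S₁) = volume (S₂ ∩ I) :=
      measure_inter_add_diff _ h₁m
    have e2 : volume (I ∩ S₁) + volume (I \ S₁) = volume I :=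
      measure_inter_add_diff _ h₁m
    have hIvol : (volume I).toReal = T := by
      rw [hI, Real.volume_Icc, sub_zero, ENNReal.toReal_ofReal hT.le]
    have f1 := hfin _ (fun t ht => ht.1.2 : S₂ ∩ I ∩ S₁ ⊆ I)
    have f2 := hfin _ (fun t ht => ht.1.2 : (S₂ ∩ I) \ S₁ ⊆ I)
    have f3 := hfin _ (inter_subset_left : I ∩ S₁ ⊆ I)
    have f4 := hfin _ (diff_subset : I \ S₁ ⊆ I)
    have e1' : (volume (S₂ ∩ I ∩ S₁)).toReal + (volume ((S₂ ∩ I) \ S₁)).toReal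
        = (volume (S₂ ∩ I)).toReal := by
      rw [← ENNReal.toReal_add f1 f2, e1]
    have e2' : (volume (I ∩ S₁)).toReal + (volume (I \ S₁)).toReal = T := by
      rw [← ENNReal.toReal_add f3 f4, e2, hIvol]
    have hdle : (volume ((S₂ ∩ I) \ S₁)).toReal ≤ (volume (I \ S₁)).toReal :=
      ENNReal.toReal_mono f4 (measure_mono (diff_subset_diff_left (inter_subset_right)))
    have hkey : (volume (S₁ ∩ I)).toReal + (volume (S₂ ∩ I)).toReal - T
        ≤ (volume (S' ∩ I)).toReal := by
      have hIS : (volume (S₁ ∩ I)).toReal = (volume (I ∩ S₁)).toReal := by rw [inter_comm]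
      have hsub2 : S₂ ∩ I ∩ S₁ ⊆ S' ∩ I := fun t ht => ⟨hsub ⟨ht.2, ht.1.1⟩, ht.1.2⟩
      have := ENNReal.toReal_mono (hfin _ (inter_subset_right : S' ∩ I ⊆ I)) (measure_mono hsub2)
      linarith
    calc (volume (S₁ ∩ I)).toReal / T + (volume (S₂ ∩ I)).toReal / T - 1
        = ((volume (S₁ ∩ I)).toReal + (volume (S₂ ∩ I)).toReal - T) / T := by
          field_simp
      _ ≤ (volume (S' ∩ I)).toReal / T := (div_le_div_iff_of_pos_right hT).2 hkey
  · have := (h₁.add h₂).sub (tendsto_const_nhds (α := ℝ) (x := (1:ℝ)))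
    norm_num at this
    exact this

end AuxDens


lemma close_inter {X : Type*} [MetricSpace X] [CompactSpace X] {C D : Set X}
    (hCc : IsClosed C) (hDc : IsClosed D) {ε : ℝ} (hε : 0 < ε) :
    ∃ δ > (0:ℝ), ∀ z : X, z ∈ thickening δ C → z ∈ thickening δ D →
      z ∈ thickening ε (C ∩ D) := by
  by_contra hcon
  push_neg at hcon
  choose z hz1 hz2 hz3 using fun n : ℕ => hcon (1 / ((n:ℝ) + 1)) (by positivity)
  obtain ⟨w, -, φ, hφ, hw⟩ := isCompact_univ.tendsto_subseq (fun n => mem_univ (z n))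
  have hlim : Tendsto (fun n : ℕ => 1 / ((φ n : ℝ) + 1)) atTop (nhds 0) :=
    tendsto_one_div_add_atTop_nhds_zero_nat.comp hφ.tendsto_atTop
  have hmem : ∀ E : Set X, IsClosed E → (∀ n : ℕ, z n ∈ thickening (1 / ((n:ℝ)+1)) E) → w ∈ E := by
    intro E hE hzE
    obtain ⟨e0, he0, -⟩ := mem_thickening_iff.1 (hzE 0)
    have hbd : ∀ n, infDist (z (φ n)) E ≤ 1 / ((φ n : ℝ) + 1) := by
      intro n
      obtain ⟨e, heE, hde⟩ := mem_thickening_iff.1 (hzE (φ n))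
      exact le_trans (infDist_le_dist_of_mem heE) hde.le
    have htend : Tendsto (fun n => infDist (z (φ n)) E) atTop (nhds (infDist w E)) :=
      ((continuous_infDist_pt E).continuousAt.tendsto).comp hw
    have : infDist w E ≤ 0 :=
      le_of_tendsto_of_tendsto htend hlim (Filter.Eventually.of_forall hbd)
    have h0 : infDist w E = 0 := le_antisymm this infDist_nonneg
    exact (hE.mem_iff_infDist_zero ⟨e0, he0⟩).2 h0
  have hwC : w ∈ C := hmem C hCc hz1
  have hwD : w ∈ D := hmem D hDc hz2
  obtain ⟨N, hN⟩ := Metric.tendsto_atTop.1 hw ε hε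
  exact hz3 (φ N) (mem_thickening_iff.2 ⟨w, ⟨hwC, hwD⟩, hN N le_rfl⟩)


theorem not_mem_and_proximal_of_not_generic {X : Type*} [MetricSpace X] [CompactSpace X]
    (f : ℝ → X → X) (hf : IsSemiflow f) (x : X) (C : Set X) (hC : IsMCA f x C)
    (hng : ¬ ∃ y ∈ C, IsMCA f y C) :
    x ∉ C ∧
    Filter.liminf
      (fun t : ℝ => Metric.infDist (f t x) ((fun a => f t a) '' C)) Filter.atTop = 0 := by
  obtain ⟨hcont, hzero, hadd⟩ := id hf
  obtain ⟨⟨hCcl, hCd⟩, hmin⟩ := id hC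
  -- continuity of t ↦ f (max t 0) x
  have horb : ContinuousOn (fun t : ℝ => f t x) (Ici 0) := by
    have hpair : Continuous (fun t : ℝ => ((t, x) : ℝ × X)) := by continuity
    have := hcont.comp hpair.continuousOn (fun t ht => ⟨ht, mem_univ x⟩)
    exact this
  have hgc : Continuous (fun t : ℝ => f (max t 0) x) := by
    refine horb.comp_continuous (continuous_id.max continuous_const) (fun t => ?_)
    exact le_max_right t 0
  -- continuity of f s for s ≥ 0
  have hfc : ∀ s : ℝ, 0 ≤ s → Continuous (f s) := by
    intro s hs
    have : ContinuousOn (fun y : X => f s y) univ := by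
      have hpair : Continuous (fun y : X => ((s, y) : ℝ × X)) := by continuity
      exact hcont.comp hpair.continuousOn (fun y _ => ⟨hs, mem_univ y⟩)
    exact continuousOn_univ.1 this
  -- uniform continuity of f s
  have huc : ∀ s : ℝ, 0 ≤ s → ∀ ε > (0:ℝ), ∃ δ > (0:ℝ),
      ∀ a b : X, dist a b < δ → dist (f s a) (f s b) < ε := by
    intro s hs ε hε
    have h1 := CompactSpace.uniformContinuous_of_continuous (hfc s hs)
    rw [Metric.uniformContinuous_iff] at h1
    obtain ⟨δ, hδ, hd⟩ := h1 ε hε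
    exact ⟨δ, hδ, fun a b hab => hd hab⟩
  -- measurability of the density sets
  have hmeas : ∀ (ε : ℝ) (D : Set X),
      MeasurableSet {t : ℝ | 0 ≤ t ∧ f t x ∈ thickening ε D} := by
    intro ε D
    have heq : {t : ℝ | 0 ≤ t ∧ f t x ∈ thickening ε D}
        = Ici 0 ∩ (fun t : ℝ => f (max t 0) x) ⁻¹' thickening ε D := by
      ext t
      simp only [mem_inter_iff, mem_Ici, mem_preimage, mem_setOf_eq]
      constructor
      · rintro ⟨ht, h⟩; exact ⟨ht, by rwa [max_eq_left ht]⟩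
      · rintro ⟨ht, h⟩; exact ⟨ht, by rwa [max_eq_left ht] at h⟩
    rw [heq]
    exact measurableSet_Ici.inter (isOpen_thickening.preimage hgc).measurableSet
  -- C is nonempty
  obtain ⟨u0, hu0S, -⟩ := AuxDens.hasDens_exists_ge (hCd 1 one_pos) 0
  obtain ⟨c₀, hc₀, -⟩ := mem_thickening_iff.1 hu0S.2
  -- key invariance: C ⊆ closure (f s '' C) for all s ≥ 0
  have hinv : ∀ s : ℝ, 0 ≤ s → C ⊆ closure (f s '' C) := by
    intro s hs
    set D := closure (f s '' C) with hD
    have hDc : IsClosed D := isClosed_closure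
    have hctr : IsCtr f x (C ∩ D) := by
      refine ⟨hCcl.inter hDc, ?_⟩
      intro ε hε
      obtain ⟨δ, hδ, hδimp⟩ := close_inter hCcl hDc hε
      obtain ⟨δ', hδ', hδ'imp⟩ := huc s hs δ hδ
      have hsub2 : (fun u => s + u) '' {t : ℝ | 0 ≤ t ∧ f t x ∈ thickening δ' C}
          ⊆ {t : ℝ | 0 ≤ t ∧ f t x ∈ thickening δ D} := by
        rintro _ ⟨u, ⟨hu0, huC⟩, rfl⟩
        refine ⟨by positivity, ?_⟩
        obtain ⟨c, hcC, hcd⟩ := mem_thickening_iff.1 huC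
        show f (s + u) x ∈ thickening δ D
        rw [← hadd s u hs hu0]
        exact mem_thickening_iff.2 ⟨f s c, subset_closure ⟨c, hcC, rfl⟩, hδ'imp _ _ hcd⟩
      have hd2 : HasDens {t : ℝ | 0 ≤ t ∧ f t x ∈ thickening δ D} 1 :=
        AuxDens.hasDens_mono hsub2 (AuxDens.hasDens_translate hs (hCd δ' hδ'))
      refine AuxDens.hasDens_inter (hmeas δ C) (hCd δ hδ) hd2 ?_
      rintro t ⟨⟨ht0, htC⟩, -, htD⟩
      exact ⟨ht0, hδimp _ htC htD⟩
    have heqC := hmin (C ∩ D) inter_subset_left hctr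
    intro c hc
    have hc' : c ∈ C ∩ D := by rw [heqC]; exact hc
    exact hc'.2
  constructor
  · exact fun hx => hng ⟨x, hx, hC⟩
  · -- liminf = 0
    have hbddA : ∀ t : ℝ, infDist (f t x) ((fun a => f t a) '' C) ≤ diam (univ : Set X) :=
      fun t => le_trans (infDist_le_dist_of_mem ⟨c₀, hc₀, rfl⟩)
        (dist_le_diam_of_mem isCompact_univ.isBounded (mem_univ _) (mem_univ _))
    have hnn : ∀ t : ℝ, 0 ≤ infDist (f t x) ((fun a => f t a) '' C) :=
      fun t => infDist_nonneg
    have hbdd : IsBoundedUnder (· ≤ ·) atTop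
        (fun t : ℝ => infDist (f t x) ((fun a => f t a) '' C)) :=
      ⟨diam (univ : Set X), Filter.eventually_map.2 (Filter.Eventually.of_forall hbddA)⟩
    have hbddge : IsBoundedUnder (· ≥ ·) atTop
        (fun t : ℝ => infDist (f t x) ((fun a => f t a) '' C)) :=
      ⟨0, Filter.eventually_map.2 (Filter.Eventually.of_forall hnn)⟩
    have key : ∀ ε > (0:ℝ), ∃ᶠ t in atTop,
        infDist (f t x) ((fun a => f t a) '' C) ≤ ε := by
      intro ε hε
      rw [Filter.frequently_atTop]
      intro T₀
      set s := max T₀ 0 with hsdef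
      have hs : (0:ℝ) ≤ s := le_max_right _ _
      obtain ⟨δ, hδ, hδimp⟩ := huc s hs ε hε
      obtain ⟨u, huS, -⟩ := AuxDens.hasDens_exists_ge (hCd (δ/2) (by positivity)) 0
      obtain ⟨hu0, huthick⟩ := huS
      obtain ⟨c, hcC, hdc⟩ := mem_thickening_iff.1 huthick
      have hcc : c ∈ closure (f u '' C) := hinv u hu0 hcC
      obtain ⟨w, hw, hwd⟩ := Metric.mem_closure_iff.1 hcc (δ/2) (by positivity)
      obtain ⟨c', hc'C, rfl⟩ := hw
      refine ⟨s + u, ?_, ?_⟩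
      · have : T₀ ≤ s := le_max_left _ _
        linarith
      · have h1 : dist (f u x) (f u c') < δ := by
          calc dist (f u x) (f u c') ≤ dist (f u x) c + dist c (f u c') := dist_triangle _ _ _
            _ < δ/2 + δ/2 := add_lt_add hdc hwd
            _ = δ := by ring
        have h2 : dist (f (s+u) x) (f (s+u) c') < ε := by
          rw [← hadd s u hs hu0, ← hadd s u hs hu0]
          exact hδimp _ _ h1
        exact le_trans (infDist_le_dist_of_mem ⟨c', hc'C, rfl⟩) h2.le
    refine le_antisymm ?_ (Filter.le_liminf_of_le hbdd.isCoboundedUnder_ge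
      (Filter.Eventually.of_forall hnn))
    by_contra hlt
    push_neg at hlt
    have h1 := Filter.liminf_le_of_frequently_le
      (key _ (by linarith : (0:ℝ) < (liminf (fun t : ℝ =>
        infDist (f t x) ((fun a => f t a) '' C)) atTop) / 2)) hbddge
    linarith
end
end

section
/- Let f : ℝ₊ × X → X be a continuous semiflow on a compact metric space X. A point x ∈ X satisfies x ∈ C_x if and only if for every neighborhood U of x, limsup_{T→∞} (1/T) λ{t ∈ [0,T] : f(t,x) ∈ U} > 0. -/
open MeasureTheory Filter Metric Set Topology
open scoped Classical

noncomputable section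

/-- The density ratio of a set of times up to time `T`. -/
def Rat' (A : Set ℝ) (T : ℝ) : ℝ := (MeasureTheory.volume (A ∩ Set.Icc 0 T)).toReal / T

lemma Rat'_nonneg (A : Set ℝ) (T : ℝ) : 0 ≤ Rat' A T := by
  rcases le_or_gt 0 T with h | h
  · exact div_nonneg ENNReal.toReal_nonneg h
  · simp [Rat', Set.Icc_eq_empty (not_le.mpr h)]

lemma vol_inter_ne_top (A : Set ℝ) (T : ℝ) : volume (A ∩ Set.Icc 0 T) ≠ ⊤ :=
  ne_top_of_le_ne_top (by simp) (measure_mono Set.inter_subset_right)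

lemma vol_toReal_le (A : Set ℝ) {T : ℝ} (hT : 0 ≤ T) :
    (volume (A ∩ Set.Icc 0 T)).toReal ≤ T := by
  have h1 : volume (A ∩ Set.Icc 0 T) ≤ ENNReal.ofReal T := by
    have := measure_mono (μ := volume) (Set.inter_subset_right (s := A) (t := Set.Icc 0 T))
    rwa [Real.volume_Icc, sub_zero] at this
  calc (volume (A ∩ Set.Icc 0 T)).toReal ≤ (ENNReal.ofReal T).toReal :=
        ENNReal.toReal_mono (by simp) h1
    _ = T := ENNReal.toReal_ofReal hT

lemma Rat'_le_one (A : Set ℝ) (T : ℝ) : Rat' A T ≤ 1 := by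
  rcases lt_or_ge 0 T with h | h
  · rw [Rat', div_le_one h]; exact vol_toReal_le A h.le
  · rcases eq_or_lt_of_le h with h' | h'
    · subst h'; simp [Rat']
    · simp [Rat', Set.Icc_eq_empty (not_le.mpr h')]

lemma Rat'_mono {A B : Set ℝ} (h : A ⊆ B) {T : ℝ} (hT : 0 < T) : Rat' A T ≤ Rat' B T := by
  exact div_le_div_of_nonneg_right (ENNReal.toReal_mono (vol_inter_ne_top B T)
    (measure_mono (Set.inter_subset_inter_left _ h))) hT.le

/-- Monotonicity of density-1. -/
lemma tendsto_Rat'_one_mono {A B : Set ℝ} (h : A ⊆ B)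
    (hA : Tendsto (Rat' A) atTop (nhds 1)) : Tendsto (Rat' B) atTop (nhds 1) := by
  refine tendsto_of_tendsto_of_tendsto_of_le_of_le' hA tendsto_const_nhds ?_
    (Eventually.of_forall fun T => Rat'_le_one B T)
  filter_upwards [eventually_gt_atTop (0 : ℝ)] with T hT
  exact Rat'_mono h hT

/-- If `S` is measurable with density 1 and `A` (within `[0,∞)`) is disjoint from `S`,
then `A` has density 0. -/
lemma tendsto_Rat'_zero_of_disjoint {S A : Set ℝ} (hS : MeasurableSet S)
    (hd : Tendsto (Rat' S) atTop (nhds 1))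
    (hdisj : ∀ t, 0 ≤ t → t ∈ A → t ∉ S) : Tendsto (Rat' A) atTop (nhds 0) := by
  have key : ∀ T : ℝ, 0 < T → Rat' A T ≤ 1 - Rat' S T := by
    intro T hT
    have hsub : A ∩ Set.Icc 0 T ⊆ Set.Icc 0 T \ (S ∩ Set.Icc 0 T) := by
      rintro t ⟨htA, htI⟩
      exact ⟨htI, fun hts => hdisj t htI.1 htA hts.1⟩
    have hdiff : volume (Set.Icc 0 T \ (S ∩ Set.Icc 0 T))
        = volume (Set.Icc 0 T) - volume (S ∩ Set.Icc 0 T) :=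
      measure_diff Set.inter_subset_right (hS.inter measurableSet_Icc).nullMeasurableSet
        (vol_inter_ne_top S T)
    have h1 : volume (A ∩ Set.Icc 0 T) ≤ volume (Set.Icc 0 T) - volume (S ∩ Set.Icc 0 T) := by
      rw [← hdiff]; exact measure_mono hsub
    have h2 : (volume (A ∩ Set.Icc 0 T)).toReal ≤ T - (volume (S ∩ Set.Icc 0 T)).toReal := by
      have hfin : volume (Set.Icc (0 : ℝ) 0) ≠ ⊤ := by simp
      have := ENNReal.toReal_mono
        (ne_top_of_le_ne_top (by simp [Real.volume_Icc]) tsub_le_self) h1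
      rw [ENNReal.toReal_sub_of_le (measure_mono Set.inter_subset_right)
        (by simp [Real.volume_Icc])] at this
      simpa [Real.volume_Icc, ENNReal.toReal_ofReal hT.le] using this
    rw [Rat', div_le_iff₀ hT, sub_mul, one_mul, Rat', div_mul_cancel₀ _ hT.ne']
    linarith
  have h0 : Tendsto (fun T => 1 - Rat' S T) atTop (nhds 0) := by
    simpa using (tendsto_const_nhds (x := (1:ℝ))).sub hd
  refine tendsto_of_tendsto_of_tendsto_of_le_of_le' tendsto_const_nhds h0
    (Eventually.of_forall fun T => Rat'_nonneg A T) ?_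
  filter_upwards [eventually_gt_atTop (0 : ℝ)] with T hT using key T hT

/-- If `S` has density 1, `B` has density 0, and `S ⊆ S' ∪ B`, then `S'` has density 1. -/
lemma tendsto_Rat'_one_of_cover {S S' B : Set ℝ}
    (hS : Tendsto (Rat' S) atTop (nhds 1)) (hB : Tendsto (Rat' B) atTop (nhds 0))
    (hcov : ∀ t, t ∈ S → t ∈ S' ∨ t ∈ B) : Tendsto (Rat' S') atTop (nhds 1) := by
  have key : ∀ T : ℝ, 0 < T → Rat' S T - Rat' B T ≤ Rat' S' T := by
    intro T hT
    have hsub : S ∩ Set.Icc 0 T ⊆ (S' ∩ Set.Icc 0 T) ∪ (B ∩ Set.Icc 0 T) := by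
      rintro t ⟨htS, htI⟩
      rcases hcov t htS with h | h
      · exact Or.inl ⟨h, htI⟩
      · exact Or.inr ⟨h, htI⟩
    have h1 : volume (S ∩ Set.Icc 0 T)
        ≤ volume (S' ∩ Set.Icc 0 T) + volume (B ∩ Set.Icc 0 T) :=
      (measure_mono hsub).trans (measure_union_le _ _)
    have h2 : (volume (S ∩ Set.Icc 0 T)).toReal
        ≤ (volume (S' ∩ Set.Icc 0 T)).toReal + (volume (B ∩ Set.Icc 0 T)).toReal := by
      have := ENNReal.toReal_mono
        (ENNReal.add_ne_top.mpr ⟨vol_inter_ne_top S' T, vol_inter_ne_top B T⟩) h1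
      rwa [ENNReal.toReal_add (vol_inter_ne_top S' T) (vol_inter_ne_top B T)] at this
    have h3 : Rat' S T ≤ Rat' S' T + Rat' B T := by
      rw [Rat', Rat', Rat', ← add_div]
      gcongr
    linarith
  have hlow : Tendsto (fun T => Rat' S T - Rat' B T) atTop (nhds 1) := by
    simpa using hS.sub hB
  refine tendsto_of_tendsto_of_tendsto_of_le_of_le' hlow tendsto_const_nhds ?_
    (Eventually.of_forall fun T => Rat'_le_one S' T)
  filter_upwards [eventually_gt_atTop (0 : ℝ)] with T hT using key T hT

/-- A `[0,1]`-valued function with nonpositive limsup tends to zero. -/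
lemma tendsto_zero_of_limsup_nonpos {g : ℝ → ℝ} (h0 : ∀ T, 0 ≤ g T) (h1 : ∀ T, g T ≤ 1)
    (h : ¬ 0 < Filter.limsup g Filter.atTop) : Tendsto g atTop (nhds 0) := by
  have hb : IsBoundedUnder (· ≤ ·) atTop g := isBoundedUnder_of ⟨1, h1⟩
  have hb' : IsBoundedUnder (· ≥ ·) atTop g := isBoundedUnder_of ⟨0, h0⟩
  refine tendsto_of_le_liminf_of_limsup_le ?_ (not_lt.mp h) hb hb'
  exact le_liminf_of_le hb.isCoboundedUnder_ge (Eventually.of_forall h0)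

theorem mem_mca_iff_positive_upper_density {X : Type*} [MetricSpace X] [CompactSpace X]
    (f : ℝ → X → X) (hf : IsSemiflow f) (x : X) (C : Set X) (hC : IsMCA f x C) :
    x ∈ C ↔ ∀ U ∈ nhds x,
      0 < Filter.limsup
        (fun T : ℝ => (MeasureTheory.volume {t ∈ Set.Icc 0 T | f t x ∈ U}).toReal / T)
        Filter.atTop := by
  have hcont : ContinuousOn (fun t : ℝ => f t x) (Set.Ici 0) := by
    have : (fun t : ℝ => f t x) = (fun p : ℝ × X => f p.1 p.2) ∘ (fun t : ℝ => (t, x)) := rfl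
    rw [this]
    exact hf.1.comp (continuous_id.prodMk continuous_const).continuousOn
      (fun t ht => ⟨ht, Set.mem_univ x⟩)
  -- rewriting the visit sets as intersections
  have hset : ∀ (U : Set X) (T : ℝ),
      {t ∈ Set.Icc 0 T | f t x ∈ U} = {t : ℝ | f t x ∈ U} ∩ Set.Icc 0 T := by
    intro U T; ext t; simp [Set.mem_sep_iff, and_comm]
  have hg_eq : ∀ U : Set X,
      (fun T : ℝ => (MeasureTheory.volume {t ∈ Set.Icc 0 T | f t x ∈ U}).toReal / T)
        = Rat' {t : ℝ | f t x ∈ U} := by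
    intro U; funext T; rw [Rat', hset U T]
  constructor
  · -- x ∈ C → positive upper density of visits to every neighborhood
    intro hx U hU
    by_contra hpos
    set A : Set ℝ := {t : ℝ | f t x ∈ U} with hA
    rw [hg_eq U] at hpos
    have hA0 : Tendsto (Rat' A) atTop (nhds 0) :=
      tendsto_zero_of_limsup_nonpos (Rat'_nonneg A) (Rat'_le_one A) hpos
    obtain ⟨ε₀, hε₀, hball₀⟩ := Metric.mem_nhds_iff.mp hU
    set δ := ε₀ / 2 with hδdef
    have hδ : 0 < δ := by positivity
    have hball : Metric.ball x (2 * δ) ⊆ U := by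
      rw [hδdef]; ring_nf; simpa using hball₀
    set C' := C \ Metric.ball x δ with hC'
    have hC'clo : IsClosed C' := hC.1.1.inter isOpen_ball.isClosed_compl
    have hctr : IsCtr f x C' := by
      refine ⟨hC'clo, fun ε hε => ?_⟩
      set η := min ε δ with hη
      have hη0 : 0 < η := lt_min hε hδ
      have base : Tendsto
          (Rat' {t : ℝ | 0 ≤ t ∧ f t x ∈ Metric.thickening η C'}) atTop (nhds 1) := by
        refine tendsto_Rat'_one_of_cover (hC.1.2 η hη0) hA0 ?_
        rintro t ⟨ht0, htm⟩
        obtain ⟨z, hzC, hzd⟩ := Metric.mem_thickening_iff.mp htm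
        by_cases hzb : z ∈ Metric.ball x δ
        · right
          have : dist (f t x) x < 2 * δ := by
            have h1 : dist (f t x) x ≤ dist (f t x) z + dist z x := dist_triangle _ _ _
            have h2 : dist z x < δ := by simpa [dist_comm] using hzb
            have h3 : η ≤ δ := min_le_right _ _
            linarith
          exact hball (Metric.mem_ball.mpr this)
        · left
          exact ⟨ht0, Metric.mem_thickening_iff.mpr ⟨z, ⟨hzC, hzb⟩, hzd⟩⟩
      refine tendsto_Rat'_one_mono ?_ base
      rintro t ⟨ht0, htm⟩
      exact ⟨ht0, Metric.thickening_mono (min_le_left _ _) C' htm⟩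
    have heq : C' = C := hC.2 C' Set.diff_subset hctr
    have hxC' : x ∈ C' := heq ▸ hx
    exact hxC'.2 (Metric.mem_ball_self hδ)
  · -- positive upper density for every neighborhood → x ∈ C
    intro h
    by_contra hx
    have hCne : C.Nonempty := by
      rcases Set.eq_empty_or_nonempty C with hne | hne
      · exfalso
        have h1 := hC.1.2 1 one_pos
        have h2 : Tendsto (Rat' {t : ℝ | 0 ≤ t ∧ f t x ∈ Metric.thickening 1 C})
            atTop (nhds 0) := by
          have : {t : ℝ | 0 ≤ t ∧ f t x ∈ Metric.thickening 1 C} = (∅ : Set ℝ) := by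
            simp [hne, Metric.thickening_empty]
          rw [this]
          have : Rat' (∅ : Set ℝ) = fun _ => 0 := by
            funext T; simp [Rat']
          rw [this]; exact tendsto_const_nhds
        have := tendsto_nhds_unique h1 h2
        norm_num at this
      · exact hne
    have hd : 0 < Metric.infDist x C := (hC.1.1.notMem_iff_infDist_pos hCne).mp hx
    set d := Metric.infDist x C with hdd
    have hlim := h (Metric.ball x (d / 2)) (Metric.ball_mem_nhds x (by positivity))
    rw [hg_eq] at hlim
    set A : Set ℝ := {t : ℝ | f t x ∈ Metric.ball x (d / 2)} with hA
    set S : Set ℝ := {t : ℝ | 0 ≤ t ∧ f t x ∈ Metric.thickening (d / 4) C} with hS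
    have hmeas : MeasurableSet S := by
      obtain ⟨u, hu, hu2⟩ := (_root_.continuousOn_iff'.mp hcont)
        (Metric.thickening (d / 4) C) isOpen_thickening
      have : S = u ∩ Set.Ici 0 := by
        rw [← hu2]; ext t; simp [hS, and_comm, Set.mem_Ici]
      rw [this]
      exact hu.measurableSet.inter measurableSet_Ici
    have hdisj : ∀ t, 0 ≤ t → t ∈ A → t ∉ S := by
      rintro t ht0 htA ⟨-, htS⟩
      have h1 : Metric.infDist (f t x) C < d / 4 := Metric.mem_thickening_iff_infDist_lt hCne |>.mp htS
      have h2 : dist x (f t x) < d / 2 := by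
        simpa [dist_comm] using Metric.mem_ball.mp htA
      have h3 : d ≤ Metric.infDist (f t x) C + dist x (f t x) :=
        Metric.infDist_le_infDist_add_dist
      linarith
    have hzero : Tendsto (Rat' A) atTop (nhds 0) :=
      tendsto_Rat'_zero_of_disjoint hmeas (hC.1.2 (d / 4) (by positivity)) hdisj
    rw [hzero.limsup_eq] at hlim
    exact lt_irrefl 0 hlim
end
end

section
/- Let f : ℝ₊ × X → X be a continuous semiflow on a Polish space X, x ∈ X a point with precompact orbit, and C_x its minimal center of attraction. Then for any l ∈ ℕ, any positive reals t₁, …, t_l and any ε > 0, lim_{T→∞} (1/T) ∫₀^T ∏_{i=1}^{l} 1_{B_ε(C_x)}(f(t_i · t, x)) dt = 1. -/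
open MeasureTheory Filter Metric Set Topology
open scoped Classical

noncomputable section

/-- `univ` has density one. -/
lemma hasDens_univ : HasDens Set.univ 1 := by
  have h : (fun T : ℝ => (volume ((Set.univ : Set ℝ) ∩ Set.Icc 0 T)).toReal / T)
      =ᶠ[atTop] (fun _ => (1 : ℝ)) := by
    filter_upwards [eventually_gt_atTop (0 : ℝ)] with T hT
    rw [Set.univ_inter, Real.volume_Icc, ENNReal.toReal_ofReal (by linarith)]
    rw [sub_zero, div_self hT.ne']
  exact Filter.Tendsto.congr' h.symm tendsto_const_nhds

/-- The intersection of two measurable density-one sets has density one. -/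
lemma hasDens_inter {A B : Set ℝ} (hB : MeasurableSet B)
    (hdA : HasDens A 1) (hdB : HasDens B 1) : HasDens (A ∩ B) 1 := by
  have hIcc : ∀ T : ℝ, volume (Set.Icc (0 : ℝ) T) ≠ ⊤ := fun T => by
    simp [Real.volume_Icc]
  have hfin : ∀ (S : Set ℝ) (T : ℝ), volume (S ∩ Set.Icc 0 T) ≠ ⊤ := fun S T =>
    ne_top_of_le_ne_top (hIcc T) (measure_mono Set.inter_subset_right)
  have h3 : Tendsto (fun T : ℝ => (volume (Set.Icc (0 : ℝ) T)).toReal / T) atTop (nhds 1) := by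
    have := hasDens_univ
    unfold HasDens at this
    simpa using this
  have hlow : Tendsto (fun T : ℝ => (volume (A ∩ Set.Icc 0 T)).toReal / T
      + (volume (B ∩ Set.Icc 0 T)).toReal / T - (volume (Set.Icc (0 : ℝ) T)).toReal / T)
      atTop (nhds 1) := by
    have h := (hdA.add hdB).sub h3
    have e : (1 : ℝ) + 1 - 1 = 1 := by norm_num
    rw [e] at h
    exact h
  refine tendsto_of_tendsto_of_tendsto_of_le_of_le' hlow hdA ?_ ?_
  · filter_upwards [eventually_gt_atTop (0 : ℝ)] with T hT
    have key : volume (A ∩ Set.Icc 0 T) + volume (B ∩ Set.Icc 0 T)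
        ≤ volume (Set.Icc (0 : ℝ) T) + volume (A ∩ B ∩ Set.Icc 0 T) := by
      have h1 : (A ∩ Set.Icc 0 T) ∪ (B ∩ Set.Icc 0 T) ⊆ Set.Icc 0 T := by
        intro t ht
        rcases ht with h | h
        exacts [h.2, h.2]
      have h2 : (A ∩ Set.Icc 0 T) ∩ (B ∩ Set.Icc 0 T) ⊆ A ∩ B ∩ Set.Icc 0 T := by
        intro t ht
        exact ⟨⟨ht.1.1, ht.2.1⟩, ht.1.2⟩
      calc volume (A ∩ Set.Icc 0 T) + volume (B ∩ Set.Icc 0 T)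
          = volume ((A ∩ Set.Icc 0 T) ∪ (B ∩ Set.Icc 0 T))
            + volume ((A ∩ Set.Icc 0 T) ∩ (B ∩ Set.Icc 0 T)) :=
          (measure_union_add_inter _ (hB.inter measurableSet_Icc)).symm
        _ ≤ volume (Set.Icc (0 : ℝ) T) + volume (A ∩ B ∩ Set.Icc 0 T) :=
          add_le_add (measure_mono h1) (measure_mono h2)
    have key' : (volume (A ∩ Set.Icc 0 T)).toReal + (volume (B ∩ Set.Icc 0 T)).toReal
        ≤ (volume (Set.Icc (0 : ℝ) T)).toReal + (volume (A ∩ B ∩ Set.Icc 0 T)).toReal := by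
      rw [← ENNReal.toReal_add (hfin A T) (hfin B T),
        ← ENNReal.toReal_add (hIcc T) (hfin _ T)]
      exact ENNReal.toReal_mono (ENNReal.add_ne_top.2 ⟨hIcc T, hfin _ T⟩) key
    rw [← add_div, ← sub_div]
    exact div_le_div_of_nonneg_right (by linarith) hT.le |>.trans_eq rfl
  · filter_upwards [eventually_gt_atTop (0 : ℝ)] with T hT
    have : (volume (A ∩ B ∩ Set.Icc 0 T)).toReal ≤ (volume (A ∩ Set.Icc 0 T)).toReal :=
      ENNReal.toReal_mono (hfin A T)
        (measure_mono fun t ht => ⟨ht.1.1, ht.2⟩)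
    exact div_le_div_of_nonneg_right this hT.le |>.trans_eq rfl

/-- A finite intersection of measurable density-one sets has density one. -/
lemma hasDens_biInter {ι : Type*} (s : Finset ι) (A : ι → Set ℝ)
    (hm : ∀ i ∈ s, MeasurableSet (A i)) (hd : ∀ i ∈ s, HasDens (A i) 1) :
    HasDens (⋂ i ∈ s, A i) 1 := by
  classical
  induction s using Finset.induction_on with
  | empty => simpa using hasDens_univ
  | @insert a s ha ih =>
    rw [Finset.set_biInter_insert]
    refine hasDens_inter ?_ (hd a (Finset.mem_insert_self a s)) ?_
    · exact MeasurableSet.biInter s.countable_toSet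
        (fun i hi => hm i (Finset.mem_insert_of_mem hi))
    · exact ih (fun i hi => hm i (Finset.mem_insert_of_mem hi))
        (fun i hi => hd i (Finset.mem_insert_of_mem hi))

/-- Density one is invariant under positive time rescaling. -/
lemma hasDens_preimage_mul {S : Set ℝ} (hd : HasDens S 1) {c : ℝ} (hc : 0 < c) :
    HasDens ((c * ·) ⁻¹' S) 1 := by
  have hmap : Tendsto (fun T : ℝ => c * T) atTop atTop :=
    Tendsto.const_mul_atTop hc tendsto_id
  have h := hd.comp hmap
  refine Filter.Tendsto.congr' ?_ h
  refine Filter.Eventually.of_forall fun T => ?_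
  have hset : ((c * ·) ⁻¹' S) ∩ Set.Icc 0 T = (c * ·) ⁻¹' (S ∩ Set.Icc 0 (c * T)) := by
    ext t
    simp only [Set.mem_inter_iff, Set.mem_preimage, Set.mem_Icc]
    constructor
    · rintro ⟨h1, h2, h3⟩
      exact ⟨h1, mul_nonneg hc.le h2, by nlinarith⟩
    · rintro ⟨h1, h2, h3⟩
      exact ⟨h1, by nlinarith, by nlinarith⟩
  have := Real.volume_preimage_mul_left hc.ne' (S ∩ Set.Icc 0 (c * T))
  simp only [Function.comp]
  rw [hset, this, ENNReal.toReal_mul, ENNReal.toReal_ofReal (abs_nonneg _),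
    abs_of_pos (inv_pos.2 hc)]
  rw [mul_comm c⁻¹ _, ← div_eq_mul_inv, div_div]

/-- Measurability of the hitting-time set of an open set under a continuous semiflow motion. -/
lemma measurableSet_hit {X : Type*} [MetricSpace X] {f : ℝ → X → X}
    (hf : ContinuousOn (fun p : ℝ × X => f p.1 p.2) (Set.Ici 0 ×ˢ Set.univ))
    (x : X) {c : ℝ} (hc : 0 < c) {U : Set X} (hU : IsOpen U) :
    MeasurableSet {t : ℝ | 0 ≤ t ∧ f (c * t) x ∈ U} := by
  have hcont : ContinuousOn (fun t : ℝ => f (c * t) x) (Set.Ici 0) := by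
    have h1 : Continuous (fun t : ℝ => ((c * t, x) : ℝ × X)) := by fun_prop
    refine hf.comp h1.continuousOn fun t ht => ?_
    exact ⟨mul_nonneg hc.le ht, Set.mem_univ x⟩
  obtain ⟨u, hu, heq⟩ := continuousOn_iff'.mp hcont U hU
  have : {t : ℝ | 0 ≤ t ∧ f (c * t) x ∈ U} = u ∩ Set.Ici 0 := by
    rw [← heq]; ext t
    simp only [Set.mem_setOf_eq, Set.mem_inter_iff, Set.mem_preimage, Set.mem_Ici]
    exact and_comm
  rw [this]
  exact hu.measurableSet.inter measurableSet_Ici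

theorem mca_multiply_attracting {X : Type*} [MetricSpace X]
    (f : ℝ → X → X) (hf : IsSemiflow f) (x : X)
    (horb : IsCompact (closure {y : X | ∃ t : ℝ, 0 ≤ t ∧ f t x = y}))
    (C : Set X) (hC : IsMCA f x C)
    (l : ℕ) (ts : Fin l → ℝ) (hts : ∀ i, 0 < ts i) (ε : ℝ) (hε : 0 < ε) :
    Filter.Tendsto
      (fun T : ℝ =>
        (∫ t in Set.Icc (0 : ℝ) T,
          ∏ i : Fin l,
            Set.indicator (Metric.thickening ε C) (fun _ => (1 : ℝ)) (f (ts i * t) x)) / T)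
      Filter.atTop (nhds 1) := by
  set A : Fin l → Set ℝ := fun i => {t : ℝ | 0 ≤ t ∧ f (ts i * t) x ∈ Metric.thickening ε C}
    with hA_def
  have hAm : ∀ i : Fin l, MeasurableSet (A i) := fun i =>
    measurableSet_hit hf.1 x (hts i) isOpen_thickening
  have hAd : ∀ i : Fin l, HasDens (A i) 1 := by
    intro i
    have h0 := hC.1.2 ε hε
    have h1 := hasDens_preimage_mul h0 (hts i)
    have heq : A i = (fun t => ts i * t) ⁻¹'
        {t : ℝ | 0 ≤ t ∧ f t x ∈ Metric.thickening ε C} := by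
      ext t
      simp only [hA_def, Set.mem_setOf_eq, Set.mem_preimage]
      constructor
      · rintro ⟨h1, h2⟩
        exact ⟨mul_nonneg (hts i).le h1, h2⟩
      · rintro ⟨h1, h2⟩
        refine ⟨?_, h2⟩
        nlinarith [hts i]
    rw [heq]
    exact h1
  set K : Set ℝ := ⋂ i ∈ (Finset.univ : Finset (Fin l)), A i with hK_def
  have hKm : MeasurableSet K :=
    MeasurableSet.biInter (Finset.univ : Finset (Fin l)).countable_toSet
      (fun i _ => hAm i)
  have hKd : HasDens K 1 :=
    hasDens_biInter Finset.univ A (fun i _ => hAm i) (fun i _ => hAd i)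
  refine Filter.Tendsto.congr' ?_ hKd
  refine Filter.Eventually.of_forall fun T => ?_
  show (volume (K ∩ Set.Icc 0 T)).toReal / T
      = (∫ t in Set.Icc (0 : ℝ) T, ∏ i : Fin l,
          Set.indicator (Metric.thickening ε C) (fun _ => (1 : ℝ)) (f (ts i * t) x)) / T
  congr 1
  have heqon : Set.EqOn
      (fun t : ℝ => Set.indicator K (fun _ => (1 : ℝ)) t)
      (fun t : ℝ => ∏ i : Fin l,
        Set.indicator (Metric.thickening ε C) (fun _ => (1 : ℝ)) (f (ts i * t) x))
      (Set.Icc 0 T) := by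
    intro t ht
    by_cases htK : t ∈ K
    · simp only
      rw [Set.indicator_of_mem htK]
      refine (Finset.prod_eq_one fun i _ => ?_).symm
      have hti : t ∈ A i := by
        have := htK
        rw [hK_def, Set.mem_iInter₂] at this
        exact this i (Finset.mem_univ i)
      exact Set.indicator_of_mem hti.2 _
    · simp only
      rw [Set.indicator_of_notMem htK]
      have : ∃ i : Fin l, t ∉ A i := by
        by_contra hcon
        push_neg at hcon
        exact htK (Set.mem_iInter₂.2 fun i _ => hcon i)
      obtain ⟨i, hi⟩ := this
      have hnot : f (ts i * t) x ∉ Metric.thickening ε C := by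
        intro hmem
        exact hi ⟨ht.1, hmem⟩
      refine (Finset.prod_eq_zero (Finset.mem_univ i) ?_).symm
      exact Set.indicator_of_notMem hnot _
  have hInt : ∫ t in Set.Icc (0 : ℝ) T, K.indicator (fun _ => (1 : ℝ)) t
      = (volume (K ∩ Set.Icc 0 T)).toReal := by
    rw [setIntegral_indicator hKm, setIntegral_const, smul_eq_mul, mul_one, Set.inter_comm, measureReal_def]
  rw [← hInt]
  exact setIntegral_congr_fun measurableSet_Icc heqon

end
end
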